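/- arXiv:1909.12735 — 6 statements merged into one kernel-verified Lean document; each statement's English description precedes it below -/
import Mathlib

section
/- Let A(y,∂) = Σ_i a_i(y)∂^i and B(y,∂) = Σ_j b_j(y)∂^j be pseudodifferential operators in one variable y. Then Res_{z=0} dz ( A(y,∂)(e^{yz}) · B(y,∂)(e^{-yz}) ) = Res_∂( A·B^* ), where A(y,∂)(e^{yz}) := Σ_i a_i(y) z^i e^{yz}, B(y,∂)(e^{-yz}) := Σ_j b_j(y)(-z)^j e^{-yz}, the z-residue extracts the coefficient of z^{-1} of the product of the two Laurent series in z (the exponentials cancel), and B^* is the formal adjoint of B. -/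
namespace ExtendedDToda

/-- Generalized binomial coefficient `C(n, j)` for an integer `n`:
`C(n,j) = n(n-1)⋯(n-j+1)/j!`. -/
def zchoose (n : ℤ) (j : ℕ) : ℤ :=
  if 0 ≤ n then ((n.toNat).choose j : ℤ)
  else (-1) ^ j * ((((j : ℤ) - 1 - n).toNat).choose j : ℤ)

/-- Pseudodifferential operators over `R`: formal series `Σ_{i ≤ N} f_i ∂^i`,
recorded by the left coefficient function `i ↦ f_i`, with support bounded above. -/
structure PDO (R : Type) [CommRing R] : Type where
  coeff : ℤ → R
  bdd : ∃ N : ℤ, ∀ n : ℤ, N < n → coeff n = 0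

namespace PDO

variable {R : Type} [CommRing R] (d : Derivation ℤ R R)

/-- The constant operator `f·∂^0`. -/
def ofR (f : R) : PDO R :=
  ⟨fun n => if n = 0 then f else 0, ⟨0, fun n hn => if_neg (by omega)⟩⟩

/-- The operator `∂^k`, `k ∈ ℤ`. -/
def Dpow (k : ℤ) : PDO R :=
  ⟨fun n => if n = k then (1 : R) else 0, ⟨k, fun n hn => if_neg (by omega)⟩⟩

def add (P Q : PDO R) : PDO R where
  coeff n := P.coeff n + Q.coeff n
  bdd := by
    obtain ⟨N, hN⟩ := P.bdd
    obtain ⟨M, hM⟩ := Q.bdd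
    exact ⟨max N M, fun n hn => by
      beta_reduce
      rw [hN n ((le_max_left N M).trans_lt hn),
        hM n ((le_max_right N M).trans_lt hn), add_zero]⟩

def neg (P : PDO R) : PDO R where
  coeff n := -P.coeff n
  bdd := by
    obtain ⟨N, hN⟩ := P.bdd
    exact ⟨N, fun n hn => by beta_reduce; rw [hN n hn, neg_zero]⟩

def sub (P Q : PDO R) : PDO R := add P (neg Q)

/-- The product of pseudodifferential operators, determined by the relation
`∂^n·f = Σ_{j ≥ 0} C(n,j) ∂^j(f) ∂^{n-j}` (valid for all `n ∈ ℤ`). -/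
noncomputable def mul (P Q : PDO R) : PDO R where
  coeff n := ∑ᶠ p : ℤ × ℕ,
    P.coeff p.1 * (zchoose p.1 p.2 • (⇑d)^[p.2] (Q.coeff (n - p.1 + p.2)))
  bdd := by
    obtain ⟨N, hN⟩ := P.bdd
    obtain ⟨M, hM⟩ := Q.bdd
    refine ⟨N + M, fun n hn => ?_⟩
    have hz : (⇑d) (0 : R) = 0 := by simp
    have h : ∀ p : ℤ × ℕ,
        P.coeff p.1 * (zchoose p.1 p.2 • (⇑d)^[p.2] (Q.coeff (n - p.1 + p.2))) = 0 := by
      intro p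
      by_cases hp : p.1 ≤ N
      · rw [hM _ (by omega), Function.iterate_fixed hz p.2, smul_zero, mul_zero]
      · rw [hN _ (by omega), zero_mul]
    beta_reduce
    rw [finsum_congr h, finsum_zero]

/-- The formal adjoint `(Σ_i f_i ∂^i)^* = Σ_i (-∂)^i f_i`. -/
noncomputable def adj (P : PDO R) : PDO R where
  coeff n := ∑ᶠ j : ℕ,
    (((-1 : ℤˣ) ^ (n + (j : ℤ)) : ℤˣ) : ℤ) •
      (zchoose (n + (j : ℤ)) j • (⇑d)^[j] (P.coeff (n + (j : ℤ))))
  bdd := by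
    obtain ⟨N, hN⟩ := P.bdd
    refine ⟨N, fun n hn => ?_⟩
    have hz : (⇑d) (0 : R) = 0 := by simp
    have h : ∀ j : ℕ,
        (((-1 : ℤˣ) ^ (n + (j : ℤ)) : ℤˣ) : ℤ) •
          (zchoose (n + (j : ℤ)) j • (⇑d)^[j] (P.coeff (n + (j : ℤ)))) = 0 := by
      intro j
      rw [hN _ (by omega), Function.iterate_fixed hz j, smul_zero, smul_zero]
    beta_reduce
    rw [finsum_congr h, finsum_zero]

/-- The residue of a pseudodifferential operator: the coefficient of `∂^{-1}`. -/
def Res (P : PDO R) : R := P.coeff (-1)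

/-- Powers of a pseudodifferential operator. -/
noncomputable def npow (P : PDO R) : ℕ → PDO R
  | 0 => Dpow 0
  | (k + 1) => mul d P (npow P k)

end PDO
end ExtendedDToda


section DickeyAux

open ExtendedDToda

lemma zchoose_eq' (n : ℤ) (k : ℕ) : zchoose n k = Ring.choose n k := by
  rcases le_or_gt 0 n with h | h
  · rw [zchoose, if_pos h]
    conv_rhs => rw [← Int.toNat_of_nonneg h]
    rw [Ring.choose_natCast]
  · rw [zchoose, if_neg (not_le.mpr h)]
    have hn : n ≤ -1 := by omega
    set t : ℕ := ((k : ℤ) - 1 - n).toNat with htdef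
    have ht : (t : ℤ) = (k : ℤ) - 1 - n := Int.toNat_of_nonneg (by omega)
    show _ = Ring.multichoose (n - k + 1) k
    rcases Nat.eq_zero_or_pos t with ht0 | ht1
    · have hk : k = 0 := by omega
      have hn1 : n = -1 := by omega
      subst hk hn1
      simp [ht0, Ring.multichoose_zero_right]
    · have hneg : n - (k : ℤ) + 1 = Int.negSucc (t - 1) := by
        rw [Int.negSucc_eq]
        push_cast [ht1]
        omega
      rw [hneg]
      have hmc : Ring.multichoose (Int.negSucc (t - 1)) k =
          Int.multichoose (Int.negSucc (t - 1)) k := rfl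
      rw [hmc, Int.multichoose]
      have h11 : t - 1 + 1 = t := by omega
      rw [h11, Int.coe_negOnePow_natCast]

lemma zchoose_vandermonde' (a b : ℤ) (s : ℕ) :
    ∑ k ∈ Finset.range (s + 1), zchoose a k * zchoose b (s - k) = zchoose (a + b) s := by
  simp only [zchoose_eq']
  rw [Ring.add_choose_eq s (Commute.all a b),
    Finset.Nat.sum_antidiagonal_eq_sum_range_succ_mk]

lemma zchoose_sub_one_self' (s : ℕ) : zchoose ((s : ℤ) - 1) s = if s = 0 then 1 else 0 := by
  cases s with
  | zero => simp [zchoose]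
  | succ m =>
    rw [zchoose, if_pos (by omega), if_neg (by omega)]
    rw [Nat.choose_eq_zero_of_lt (by omega)]
    simp

variable {R : Type} [CommRing R] (d : Derivation ℤ R R)

lemma iter_zero' (k : ℕ) : (⇑d)^[k] (0 : R) = 0 :=
  Function.iterate_fixed (by simp) k

lemma iter_zsmul' (k : ℕ) (z : ℤ) (x : R) : (⇑d)^[k] (z • x) = z • (⇑d)^[k] x := by
  induction k generalizing x with
  | zero => rfl
  | succ n ih =>
    have hd : d (z • x) = z • d x := d.toLinearMap.map_smul z x
    rw [Function.iterate_succ_apply, hd, ih, ← Function.iterate_succ_apply]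

lemma iter_sum' {α : Type*} (k : ℕ) (s : Finset α) (f : α → R) :
    (⇑d)^[k] (∑ j ∈ s, f j) = ∑ j ∈ s, (⇑d)^[k] (f j) := by
  induction k with
  | zero => rfl
  | succ n ih =>
    rw [Function.iterate_succ_apply', ih, map_sum]
    simp [Function.iterate_succ_apply']

lemma sum_sum_eq' {M : Type*} [AddCommMonoid M] (f : ℕ → ℕ → M) (K : ℕ)
    (hf : ∀ k j, K ≤ k + j → f k j = 0) :
    ∑ k ∈ Finset.range K, ∑ j ∈ Finset.range K, f k j
      = ∑ s ∈ Finset.range K, ∑ k ∈ Finset.range (s + 1), f k (s - k) := by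
  have hsig := Finset.sum_sigma' (Finset.range K) (fun s => Finset.range (s + 1))
    (fun s k => f k (s - k))
  rw [← Finset.sum_product', hsig]
  rw [← Finset.sum_filter_of_ne (p := fun p : ℕ × ℕ => p.1 + p.2 < K)
    (fun x _ hx => by by_contra h; exact hx (hf x.1 x.2 (by omega)))]
  refine Finset.sum_bij' (fun p _ => (⟨p.1 + p.2, p.1⟩ : Σ _ : ℕ, ℕ))
    (fun q _ => (q.2, q.1 - q.2)) ?_ ?_ ?_ ?_ ?_
  · intro p hp
    simp only [Finset.mem_filter, Finset.mem_product, Finset.mem_range] at hp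
    simp only [Finset.mem_sigma, Finset.mem_range]
    omega
  · intro q hq
    simp only [Finset.mem_sigma, Finset.mem_range] at hq
    simp only [Finset.mem_filter, Finset.mem_product, Finset.mem_range]
    omega
  · intro p hp; simp
  · intro q hq
    simp only [Finset.mem_sigma, Finset.mem_range] at hq
    obtain ⟨s, k⟩ := q
    simp only at hq ⊢
    have hks : k + (s - k) = s := by omega
    rw [hks]
  · intro p hp; simp

end DickeyAux

open ExtendedDToda ExtendedDToda.PDO in
/-- the Dickey residue lemma:
`Res_{z=0} dz (A(y,∂)(e^{yz}) · B(y,∂)(e^{-yz})) = Res_∂(A·B^*)`.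
The left-hand side is the coefficient of `z^{-1}` of the product of the two
Laurent series `A(e^{yz}) = Σ_i a_i z^i e^{yz}` and
`B(e^{-yz}) = Σ_j b_j (-z)^j e^{-yz}` (the exponentials cancel). -/
theorem statement2 {R : Type} [CommRing R] (d : Derivation ℤ R R) (A B : PDO R) :
    (∑ᶠ j : ℤ, (((-1 : ℤˣ) ^ j : ℤˣ) : ℤ) • (A.coeff (-1 - j) * B.coeff j))
      = Res (mul d A (adj d B)) := by
  
  classical
  obtain ⟨N, hN⟩ := A.bdd
  obtain ⟨M, hM⟩ := B.bdd
  set K : ℕ := (M + 1 + N).toNat + 1 with hKdef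
  have hKbig : M + 1 + N < (K : ℤ) := by
    have h1 := Int.self_le_toNat (M + 1 + N)
    push_cast [hKdef]
    omega
  -- adjoint coefficient vanishing above M
  have hadj_zero : ∀ m : ℤ, M < m → (adj d B).coeff m = 0 := by
    intro m hm
    show (∑ᶠ j : ℕ, (((-1 : ℤˣ) ^ (m + (j : ℤ)) : ℤˣ) : ℤ) •
        (zchoose (m + (j : ℤ)) j • (⇑d)^[j] (B.coeff (m + (j : ℤ))))) = 0
    have h : ∀ j : ℕ, (((-1 : ℤˣ) ^ (m + (j : ℤ)) : ℤˣ) : ℤ) •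
        (zchoose (m + (j : ℤ)) j • (⇑d)^[j] (B.coeff (m + (j : ℤ)))) = 0 := by
      intro j
      rw [hM _ (by omega), iter_zero', smul_zero, smul_zero]
    rw [finsum_congr h, finsum_zero]
  -- adjoint coefficient as a finite sum over `range K`
  have hadj_sum : ∀ m : ℤ, (∀ j : ℕ, K ≤ j → M < m + j) →
      (adj d B).coeff m = ∑ j ∈ Finset.range K,
        (((-1 : ℤˣ) ^ (m + (j : ℤ)) : ℤˣ) : ℤ) •
          (zchoose (m + (j : ℤ)) j • (⇑d)^[j] (B.coeff (m + (j : ℤ)))) := by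
    intro m hm
    show (∑ᶠ j : ℕ, (((-1 : ℤˣ) ^ (m + (j : ℤ)) : ℤˣ) : ℤ) •
        (zchoose (m + (j : ℤ)) j • (⇑d)^[j] (B.coeff (m + (j : ℤ))))) = _
    apply finsum_eq_sum_of_support_subset
    intro j hj
    simp only [Function.mem_support] at hj
    simp only [Finset.coe_range, Set.mem_Iio]
    by_contra hjK
    push_neg at hjK
    exact hj (by rw [hM _ (hm j hjK), iter_zero', smul_zero, smul_zero])
  -- the right-hand side as a finite double sum
  have hRHS0 : Res (mul d A (adj d B)) = ∑ᶠ p : ℤ × ℕ,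
      A.coeff p.1 * (zchoose p.1 p.2 • (⇑d)^[p.2]
        ((adj d B).coeff (-1 - p.1 + p.2))) := rfl
  have hsupp : (Function.support fun p : ℤ × ℕ =>
      A.coeff p.1 * (zchoose p.1 p.2 • (⇑d)^[p.2]
        ((adj d B).coeff (-1 - p.1 + p.2)))) ⊆
      ↑((Finset.Icc (-M - 1) N) ×ˢ (Finset.range K)) := by
    intro p hp
    simp only [Function.mem_support] at hp
    have h1 : p.1 ≤ N := by
      by_contra h
      exact hp (by rw [hN _ (by omega), zero_mul])
    have h2 : -1 - p.1 + p.2 ≤ M := by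
      by_contra h
      exact hp (by
        rw [hadj_zero _ (by omega), iter_zero', smul_zero, mul_zero])
    simp only [Finset.coe_product, Set.mem_prod, Finset.mem_coe, Finset.mem_Icc,
      Finset.mem_range]
    refine ⟨⟨by omega, h1⟩, by omega⟩
  rw [hRHS0, finsum_eq_sum_of_support_subset _ hsupp, Finset.sum_product]
  -- collapse the inner sums for each fixed i
  have hR : ∀ i ∈ Finset.Icc (-M - 1) N,
      (∑ k ∈ Finset.range K, A.coeff i * (zchoose i k • (⇑d)^[k]
        ((adj d B).coeff (-1 - i + k))))
      = (((-1 : ℤˣ) ^ (-1 - i) : ℤˣ) : ℤ) • (A.coeff i * B.coeff (-1 - i)) := by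
    intro i hi
    rw [Finset.mem_Icc] at hi
    have step1 : ∀ k ∈ Finset.range K,
        A.coeff i * (zchoose i k • (⇑d)^[k] ((adj d B).coeff (-1 - i + k)))
        = ∑ j ∈ Finset.range K,
            (zchoose i k * ((((-1 : ℤˣ) ^ ((-1 - i + (k : ℤ)) + (j : ℤ)) : ℤˣ) : ℤ) *
              zchoose ((-1 - i + (k : ℤ)) + (j : ℤ)) j)) •
            (A.coeff i * (⇑d)^[k + j] (B.coeff ((-1 - i + (k : ℤ)) + (j : ℤ)))) := by
      intro k hk
      rw [hadj_sum (-1 - i + (k : ℤ)) (fun j hj => by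
        have h2 := hi.2
        have hj' : (K : ℤ) ≤ (j : ℤ) := by exact_mod_cast hj
        have hk0 : (0 : ℤ) ≤ (k : ℤ) := Int.natCast_nonneg k
        omega)]
      rw [iter_sum', Finset.smul_sum, Finset.mul_sum]
      refine Finset.sum_congr rfl fun j hj => ?_
      rw [iter_zsmul', iter_zsmul', ← Function.iterate_add_apply]
      rw [mul_smul_comm, mul_smul_comm, mul_smul_comm, smul_smul, smul_smul,
        mul_assoc]
    rw [Finset.sum_congr rfl step1]
    rw [sum_sum_eq' _ K (fun k j hkj => by
      have h2 := hi.2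
      have hkj' : (K : ℤ) ≤ (k : ℤ) + (j : ℤ) := by exact_mod_cast hkj
      rw [hM ((-1 - i + (k : ℤ)) + (j : ℤ)) (by omega), iter_zero', mul_zero,
        smul_zero])]
    have step2 : ∀ s ∈ Finset.range K,
        (∑ k ∈ Finset.range (s + 1),
          (zchoose i k * ((((-1 : ℤˣ) ^ ((-1 - i + (k : ℤ)) + ((s - k : ℕ) : ℤ)) : ℤˣ) : ℤ) *
            zchoose ((-1 - i + (k : ℤ)) + ((s - k : ℕ) : ℤ)) (s - k))) •
          (A.coeff i * (⇑d)^[k + (s - k)]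
            (B.coeff ((-1 - i + (k : ℤ)) + ((s - k : ℕ) : ℤ)))))
        = (if s = 0 then (1 : ℤ) else 0) •
            ((((-1 : ℤˣ) ^ (-1 - i + (s : ℤ)) : ℤˣ) : ℤ) •
              (A.coeff i * (⇑d)^[s] (B.coeff (-1 - i + (s : ℤ))))) := by
      intro s hs
      have hterm : ∀ k ∈ Finset.range (s + 1),
          (zchoose i k * ((((-1 : ℤˣ) ^ ((-1 - i + (k : ℤ)) + ((s - k : ℕ) : ℤ)) : ℤˣ) : ℤ) *
            zchoose ((-1 - i + (k : ℤ)) + ((s - k : ℕ) : ℤ)) (s - k))) •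
          (A.coeff i * (⇑d)^[k + (s - k)]
            (B.coeff ((-1 - i + (k : ℤ)) + ((s - k : ℕ) : ℤ))))
          = (zchoose i k * zchoose (-1 - i + (s : ℤ)) (s - k)) •
              ((((-1 : ℤˣ) ^ (-1 - i + (s : ℤ)) : ℤˣ) : ℤ) •
                (A.coeff i * (⇑d)^[s] (B.coeff (-1 - i + (s : ℤ))))) := by
        intro k hk
        rw [Finset.mem_range] at hk
        have hsk : ((s - k : ℕ) : ℤ) = (s : ℤ) - (k : ℤ) := by omega
        have he : (-1 - i + (k : ℤ)) + ((s - k : ℕ) : ℤ) = -1 - i + (s : ℤ) := by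
          rw [hsk]; ring
        have hkk : k + (s - k) = s := by omega
        rw [hkk, he]
        rw [show zchoose i k *
            ((((-1 : ℤˣ) ^ (-1 - i + (s : ℤ)) : ℤˣ) : ℤ) *
              zchoose (-1 - i + (s : ℤ)) (s - k))
            = (zchoose i k * zchoose (-1 - i + (s : ℤ)) (s - k)) *
              (((-1 : ℤˣ) ^ (-1 - i + (s : ℤ)) : ℤˣ) : ℤ) from by ring,
          ← smul_smul]
      rw [Finset.sum_congr rfl hterm, ← Finset.sum_smul, zchoose_vandermonde',
        show i + (-1 - i + (s : ℤ)) = (s : ℤ) - 1 from by ring,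
        zchoose_sub_one_self']
    rw [Finset.sum_congr rfl step2]
    simp only [ite_smul, one_smul, zero_smul]
    rw [Finset.sum_ite_eq' (Finset.range K) 0
      (fun s => (((-1 : ℤˣ) ^ (-1 - i + (s : ℤ)) : ℤˣ) : ℤ) •
        (A.coeff i * (⇑d)^[s] (B.coeff (-1 - i + (s : ℤ)))))]
    rw [if_pos (Finset.mem_range.mpr (by omega))]
    norm_num
  rw [Finset.sum_congr rfl hR]
  -- the left-hand side as a finite sum
  have hsuppL : (Function.support fun j : ℤ =>
      (((-1 : ℤˣ) ^ j : ℤˣ) : ℤ) • (A.coeff (-1 - j) * B.coeff j)) ⊆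
      ↑(Finset.Icc (-1 - N) M) := by
    intro j hj
    simp only [Function.mem_support] at hj
    have h1 : -1 - j ≤ N := by
      by_contra h
      exact hj (by rw [hN _ (by omega), zero_mul, smul_zero])
    have h2 : j ≤ M := by
      by_contra h
      exact hj (by rw [hM _ (by omega), mul_zero, smul_zero])
    simp only [Finset.mem_coe, Finset.mem_Icc]
    omega
  rw [finsum_eq_sum_of_support_subset _ hsuppL]
  -- reindex j ↦ -1 - j
  refine Finset.sum_bij' (fun j _ => -1 - j) (fun i _ => -1 - i) ?_ ?_ ?_ ?_ ?_
  · intro j hj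
    rw [Finset.mem_Icc] at hj ⊢
    beta_reduce
    omega
  · intro i hi
    rw [Finset.mem_Icc] at hi ⊢
    beta_reduce
    omega
  · intro j hj; show -1 - (-1 - j) = j; omega
  · intro i hi; show -1 - (-1 - i) = i; omega
  · intro j hj
    have h1 : -1 - (-1 - j) = j := by ring
    rw [h1]
end

section
/- Let A(y,∂) and B(y,∂) be pseudodifferential operators in the variable y, and let y' be a second variable with ∂' = d/dy'. Then Res_{z=0} dz ( A(y,∂)(e^{yz}) · B(y',∂')(e^{-y'z}) ), computed by Taylor-expanding B(y',∂')(e^{-y'z}) at y' = y, equals ( A(y,∂)·B^*(y,∂)·∂ ) applied to (y-y')^0, where for a pseudodifferential operator P = Σ_k p_k ∂^{-k} one defines P·(y-y')^0 := Σ_{k ≥ 0} p_k (y-y')^k / k!. -/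
namespace ExtendedDToda
namespace PDO

variable {R : Type} [CommRing R]

/-- Coefficientwise derivative `P' = Σ_i ∂(p_i) ∂^i` of a pseudodifferential
operator. -/
def dC (d : Derivation ℤ R R) (P : PDO R) : PDO R :=
  ⟨fun n => d (P.coeff n), by
    obtain ⟨N, hN⟩ := P.bdd
    exact ⟨N, fun n hn => by beta_reduce; rw [hN n hn]; simp⟩⟩

/-- The sequence `B_0 = B`, `B_{n+1} = B_n' + B_n·∂`, so that
`∂_y^n (B(y,∂)(e^{-yz})) = B_n(y,∂)(e^{-yz})`.  It arises when the second
factor `B(y',∂')(e^{-y'z})` is Taylor-expanded at `y' = y`. -/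
noncomputable def Bseq (d : Derivation ℤ R R) (B : PDO R) : ℕ → PDO R
  | 0 => B
  | (k + 1) => add (dC d (Bseq d B k)) (mul d (Bseq d B k) (Dpow 1))

end PDO
end ExtendedDToda


namespace ExtendedDToda

lemma zchoose_zero_right (n : ℤ) : zchoose n 0 = 1 := by
  unfold zchoose; split <;> simp

lemma zchoose_zero_left {j : ℕ} (hj : j ≠ 0) : zchoose 0 j = 0 := by
  unfold zchoose
  rw [if_pos le_rfl]
  simp [Nat.choose_eq_zero_of_lt (Nat.pos_of_ne_zero hj)]

lemma zchoose_diag (s : ℕ) (hs : s ≠ 0) : zchoose ((s : ℤ) - 1) s = 0 := by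
  unfold zchoose
  rw [if_pos (by omega : (0:ℤ) ≤ (s:ℤ) - 1)]
  have h1 : ((s:ℤ) - 1).toNat = s - 1 := by omega
  rw [h1, Nat.choose_eq_zero_of_lt (by omega)]
  simp

lemma natfac (m j : ℕ) :
    (j.factorial : ℤ) * (m.choose j : ℤ) = ∏ i ∈ Finset.range j, ((m : ℤ) - (i : ℕ)) := by
  induction j with
  | zero => simp
  | succ j ih =>
    rw [Finset.prod_range_succ, ← ih]
    rcases le_or_gt j m with h | h
    · have h1 := Nat.choose_succ_right_eq m j
      zify [h] at h1
      have e1 : (((j+1).factorial : ℤ)) = ((j:ℤ) + 1) * (j.factorial : ℤ) := by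
        rw [Nat.factorial_succ]; push_cast; ring
      calc ((j+1).factorial : ℤ) * (m.choose (j+1) : ℤ)
          = (j.factorial : ℤ) * ((m.choose (j+1) : ℤ) * ((j:ℤ)+1)) := by rw [e1]; ring
        _ = (j.factorial : ℤ) * ((m.choose j : ℤ) * ((m:ℤ) - j)) := by rw [h1]
        _ = (j.factorial : ℤ) * (m.choose j : ℤ) * ((m:ℤ) - j) := by ring
    · have c1 : m.choose (j+1) = 0 := Nat.choose_eq_zero_of_lt (by omega)
      have c2 : m.choose j = 0 := Nat.choose_eq_zero_of_lt h
      simp [c1, c2]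

lemma zchoose_fac (n : ℤ) (j : ℕ) :
    (j.factorial : ℤ) * zchoose n j = ∏ i ∈ Finset.range j, (n - (i : ℕ)) := by
  unfold zchoose
  by_cases h : 0 ≤ n
  · rw [if_pos h, natfac, Int.toNat_of_nonneg h]
  · rw [if_neg h]
    push_neg at h
    have hM : ((((j : ℤ) - 1 - n).toNat : ℤ)) = (j : ℤ) - 1 - n := Int.toNat_of_nonneg (by omega)
    have h1 : (j.factorial : ℤ) * ((-1) ^ j * (((((j : ℤ) - 1 - n).toNat).choose j : ℤ)))
        = (-1) ^ j * ((j.factorial : ℤ) * ((((j : ℤ) - 1 - n).toNat).choose j : ℤ)) := by ring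
    rw [h1, natfac, hM]
    have h2 : ∀ i ∈ Finset.range j, ((j:ℤ) - 1 - n - (i:ℕ))
        = (-1) * ((fun i : ℕ => n - (i:ℕ)) (j - 1 - i)) := by
      intro i hi
      simp only [Finset.mem_range] at hi
      have e : ((j - 1 - i : ℕ) : ℤ) = (j : ℤ) - 1 - i := by omega
      simp only [e]; ring
    rw [Finset.prod_congr rfl h2, Finset.prod_mul_distrib, Finset.prod_const, Finset.card_range,
      Finset.prod_range_reflect (fun i : ℕ => n - (i:ℕ)) j, ← mul_assoc, ← mul_pow]
    norm_num

lemma zchoose_pascal (n : ℤ) (j : ℕ) :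
    zchoose n (j + 1) = zchoose (n - 1) (j + 1) + zchoose (n - 1) j := by
  have hfac : (((j + 1).factorial : ℤ)) ≠ 0 := Int.natCast_ne_zero.mpr (Nat.factorial_ne_zero _)
  apply mul_left_cancel₀ hfac
  have e1 : (((j+1).factorial : ℤ)) = ((j:ℤ) + 1) * (j.factorial : ℤ) := by
    rw [Nat.factorial_succ]; push_cast; ring
  rw [mul_add, zchoose_fac n (j+1), zchoose_fac (n-1) (j+1), e1, mul_assoc,
    zchoose_fac (n-1) j]
  rw [Finset.prod_range_succ', Finset.prod_range_succ]
  have hc : ∀ i ∈ Finset.range j, (n - ((i + 1 : ℕ) : ℤ)) = (n - 1) - (i : ℕ) := by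
    intro i _; push_cast; ring
  rw [Finset.prod_congr rfl hc]
  push_cast
  ring

def zSm (a b : ℤ) (s : ℕ) : ℤ := ∑ j ∈ Finset.range (s + 1), zchoose a j * zchoose b (s - j)

lemma zSm_E (a b : ℤ) (s : ℕ) : zSm (a + 1) b (s + 1) = zSm a b (s + 1) + zSm a b s := by
  unfold zSm
  rw [Finset.sum_range_succ' (fun j => zchoose (a+1) j * zchoose b (s + 1 - j)) (s+1)]
  rw [Finset.sum_range_succ' (fun j => zchoose a j * zchoose b (s + 1 - j)) (s+1)]
  have h1 : ∀ j ∈ Finset.range (s+1),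
      zchoose (a+1) (j+1) * zchoose b (s + 1 - (j+1))
        = zchoose a (j+1) * zchoose b (s - j) + zchoose a j * zchoose b (s - j) := by
    intro j _
    have hp := zchoose_pascal (a+1) j
    have e : a + 1 - 1 = a := by ring
    rw [e] at hp
    rw [Nat.succ_sub_succ, hp]
    ring
  rw [Finset.sum_congr rfl h1, Finset.sum_add_distrib]
  simp only [zchoose_zero_right, one_mul, Nat.sub_zero, Nat.succ_sub_succ_eq_sub]
  ring

lemma zvandermonde (a b : ℤ) (s : ℕ) : zSm a b s = zchoose (a + b) s := by
  induction a using Int.induction_on generalizing s with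
  | zero =>
    unfold zSm
    rw [Finset.sum_eq_single 0]
    · simp [zchoose_zero_right]
    · intro j _ hj0
      rw [zchoose_zero_left hj0, zero_mul]
    · intro h; exact absurd (Finset.mem_range.mpr (Nat.succ_pos s)) h
  | succ i ih =>
    cases s with
    | zero => simp [zSm, zchoose_zero_right]
    | succ s =>
      have hp2 := zchoose_pascal ((i:ℤ) + 1 + b) s
      have e : (i:ℤ) + 1 + b - 1 = (i:ℤ) + b := by ring
      rw [e] at hp2
      rw [zSm_E, ih, ih, hp2]
  | pred i ih =>
    induction s with
    | zero => simp [zSm, zchoose_zero_right]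
    | succ s ihs =>
      have hE := zSm_E (-(i:ℤ) - 1) b s
      have e : -(i:ℤ) - 1 + 1 = -(i:ℤ) := by ring
      rw [e] at hE
      have hp2 := zchoose_pascal (-(i:ℤ) + b) s
      have e2 : -(i:ℤ) + b - 1 = -(i:ℤ) - 1 + b := by ring
      rw [e2] at hp2
      have h3 := ih (s+1)
      rw [h3] at hE
      rw [hp2] at hE
      linarith [ihs]

namespace PDO

variable {R : Type} [CommRing R] (d : Derivation ℤ R R)

lemma sgn_succ (m : ℤ) :
    (((-1:ℤˣ) ^ (m+1) : ℤˣ) : ℤ) = -(((-1:ℤˣ) ^ m : ℤˣ) : ℤ) := by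
  rw [zpow_add, zpow_one]
  simp

lemma dIter_eq (j : ℕ) (x : R) : (⇑d)^[j] x = ((d.toLinearMap ^ j : R →ₗ[ℤ] R)) x := by
  rw [Module.End.coe_pow]
  rfl

lemma dIter_zero (j : ℕ) : (⇑d)^[j] (0:R) = 0 := by
  rw [dIter_eq]; exact map_zero _

lemma dIter_add (j : ℕ) (x y : R) : (⇑d)^[j] (x + y) = (⇑d)^[j] x + (⇑d)^[j] y := by
  rw [dIter_eq, dIter_eq, dIter_eq]; exact map_add _ _ _

lemma dIter_smul (j : ℕ) (c : ℤ) (x : R) : (⇑d)^[j] (c • x) = c • (⇑d)^[j] x := by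
  rw [dIter_eq, dIter_eq]; exact map_smul _ _ _

lemma mul_coeff_eq_sum (P Q : PDO R) {NP NQ : ℤ}
    (hP : ∀ n, NP < n → P.coeff n = 0) (hQ : ∀ n, NQ < n → Q.coeff n = 0) (n : ℤ)
    {s : Finset (ℤ × ℕ)}
    (hs : ∀ (i : ℤ) (j : ℕ), i ≤ NP → n - i + (j:ℤ) ≤ NQ → (i, j) ∈ s) :
    (mul d P Q).coeff n
      = ∑ p ∈ s, P.coeff p.1 * (zchoose p.1 p.2 • (⇑d)^[p.2] (Q.coeff (n - p.1 + p.2))) := by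
  refine finsum_eq_finset_sum_of_support_subset _ ?_
  intro p hp
  simp only [Function.mem_support] at hp
  by_cases h1 : p.1 ≤ NP
  · by_cases h2 : n - p.1 + (p.2:ℤ) ≤ NQ
    · exact Finset.mem_coe.mpr (hs p.1 p.2 h1 h2)
    · exfalso; apply hp
      rw [hQ _ (by omega), dIter_zero, smul_zero, mul_zero]
  · exfalso; apply hp
    rw [hP _ (by omega), zero_mul]

lemma adj_coeff_eq_sum (Q : PDO R) {NQ : ℤ} (hQ : ∀ n, NQ < n → Q.coeff n = 0)
    (m : ℤ) {L : ℕ} (hL : NQ - m < (L:ℤ)) :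
    (adj d Q).coeff m = ∑ l ∈ Finset.range L,
      (((-1 : ℤˣ) ^ (m + (l : ℤ)) : ℤˣ) : ℤ) •
        (zchoose (m + (l:ℤ)) l • (⇑d)^[l] (Q.coeff (m + (l:ℤ)))) := by
  refine finsum_eq_finset_sum_of_support_subset _ ?_
  intro l hl
  simp only [Function.mem_support] at hl
  by_cases h : l < L
  · exact Finset.mem_coe.mpr (Finset.mem_range.mpr h)
  · exfalso; apply hl
    rw [hQ _ (by omega), dIter_zero, smul_zero, smul_zero]

lemma adj_coeff_bound (Q : PDO R) {NQ : ℤ} (hQ : ∀ n, NQ < n → Q.coeff n = 0) :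
    ∀ m, NQ < m → (adj d Q).coeff m = 0 := by
  intro m hm
  rw [adj_coeff_eq_sum d Q hQ m (L := 1) (by omega), Finset.sum_range_one]
  rw [hQ _ (by push_cast; omega)]
  rw [dIter_zero, smul_zero, smul_zero]

lemma mul_Dpow_coeff (P : PDO R) (n : ℤ) :
    (mul d P (Dpow 1)).coeff n = P.coeff (n - 1) := by
  show (∑ᶠ p : ℤ × ℕ,
      P.coeff p.1 * (zchoose p.1 p.2 • (⇑d)^[p.2] ((Dpow 1 : PDO R).coeff (n - p.1 + p.2)))) = _
  rw [finsum_eq_single _ (((n-1 : ℤ), (0:ℕ)) : ℤ × ℕ) ?_]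
  · show P.coeff (n-1) * (zchoose (n-1) 0 • (⇑d)^[0]
      ((Dpow 1 : PDO R).coeff (n - (n-1) + ((0:ℕ):ℤ)))) = P.coeff (n-1)
    have e : n - (n - 1) + ((0:ℕ):ℤ) = 1 := by push_cast; ring
    rw [e]
    show P.coeff (n-1) * (zchoose (n-1) 0 • (⇑d)^[0] (if (1:ℤ) = 1 then (1:R) else 0)) = _
    rw [if_pos rfl, zchoose_zero_right, Function.iterate_zero, id_eq, one_smul, mul_one]
  · rintro ⟨i, j⟩ hp
    cases j with
    | zero =>
      have hi : i ≠ n - 1 := by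
        intro h; exact hp (by rw [h])
      show P.coeff i * (zchoose i 0 • (⇑d)^[0] (if n - i + ((0:ℕ):ℤ) = 1 then (1:R) else 0)) = 0
      rw [if_neg (by omega), Function.iterate_zero, id_eq, smul_zero, mul_zero]
    | succ j' =>
      show P.coeff i * (zchoose i (j'+1) • (⇑d)^[j'+1]
        (if n - i + ((j'+1:ℕ):ℤ) = 1 then (1:R) else 0)) = 0
      have hz : (⇑d)^[j'+1] (if n - i + ((j'+1:ℕ):ℤ) = 1 then (1:R) else 0) = 0 := by
        rw [Function.iterate_succ_apply]
        have hd : d (if n - i + ((j'+1:ℕ):ℤ) = 1 then (1:R) else 0) = 0 := by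
          split <;> simp
        rw [hd, dIter_zero]
      rw [hz, smul_zero, mul_zero]

lemma res_pair (P Q : PDO R) :
    (mul d P (adj d Q)).coeff (-1)
      = ∑ᶠ t : ℤ, (((-1 : ℤˣ) ^ t : ℤˣ) : ℤ) • (P.coeff (-1 - t) * Q.coeff t) := by
  classical
  obtain ⟨NP, hP⟩ := P.bdd
  obtain ⟨NQ, hQ⟩ := Q.bdd
  set L : ℕ := (NP + NQ + 2).toNat + 1 with hLdef
  have hLb : NP + NQ + 1 < (L : ℤ) := by
    simp only [hLdef]; push_cast; omega
  set g : ℤ → ℕ → ℕ → R := fun i j l =>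
    (((-1 : ℤˣ) ^ ((j:ℤ) + (l:ℤ) - 1 - i) : ℤˣ) : ℤ) •
      ((zchoose i j * zchoose ((j:ℤ) + (l:ℤ) - 1 - i) l) •
        (P.coeff i * (⇑d)^[j + l] (Q.coeff ((j:ℤ) + (l:ℤ) - 1 - i)))) with hgdef
  have hgP : ∀ (i : ℤ) (j l : ℕ), NP < i → g i j l = 0 := by
    intro i j l h
    simp only [hgdef]
    rw [hP i h, zero_mul, smul_zero, smul_zero]
  have hgQ : ∀ (i : ℤ) (j l : ℕ), NQ < (j:ℤ) + (l:ℤ) - 1 - i → g i j l = 0 := by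
    intro i j l h
    simp only [hgdef]
    rw [hQ _ h, dIter_zero, mul_zero, smul_zero, smul_zero]
  have step1 : (mul d P (adj d Q)).coeff (-1)
      = ∑ p ∈ Finset.Icc (-1 - NQ) NP ×ˢ Finset.range L,
          P.coeff p.1 * (zchoose p.1 p.2 • (⇑d)^[p.2] ((adj d Q).coeff (-1 - p.1 + p.2))) := by
    refine mul_coeff_eq_sum d P (adj d Q) hP (adj_coeff_bound d Q hQ) (-1) ?_
    intro i j h1 h2
    refine Finset.mem_product.mpr ⟨Finset.mem_Icc.mpr ⟨by omega, h1⟩, Finset.mem_range.mpr ?_⟩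
    omega
  have step2 : ∀ p ∈ Finset.Icc (-1 - NQ) NP ×ˢ Finset.range L,
      P.coeff p.1 * (zchoose p.1 p.2 • (⇑d)^[p.2] ((adj d Q).coeff (-1 - p.1 + p.2)))
        = ∑ l ∈ Finset.range L, g p.1 p.2 l := by
    rintro ⟨i, j⟩ hp
    obtain ⟨hi, hj⟩ := Finset.mem_product.mp hp
    rw [Finset.mem_Icc] at hi
    rw [adj_coeff_eq_sum d Q hQ (-1 - i + (j:ℤ)) (L := L) (by omega)]
    rw [dIter_eq d j, map_sum, Finset.smul_sum, Finset.mul_sum]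
    refine Finset.sum_congr rfl fun l _ => ?_
    rw [← dIter_eq d j, dIter_smul, dIter_smul, ← Function.iterate_add_apply]
    have e : -1 - i + (j:ℤ) + (l:ℤ) = (j:ℤ) + (l:ℤ) - 1 - i := by ring
    rw [e]
    simp only [hgdef]
    simp only [zsmul_eq_mul]
    push_cast
    ring
  have main1 : (mul d P (adj d Q)).coeff (-1)
      = ∑ i ∈ Finset.Icc (-1 - NQ) NP, ∑ j ∈ Finset.range L, ∑ l ∈ Finset.range L, g i j l := by
    rw [step1, Finset.sum_congr rfl step2, Finset.sum_product]
  have swap1 : (∑ i ∈ Finset.Icc (-1 - NQ) NP, ∑ j ∈ Finset.range L, ∑ l ∈ Finset.range L, g i j l)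
      = ∑ j ∈ Finset.range L, ∑ l ∈ Finset.range L,
          ∑ t ∈ Finset.Icc (-1 - NP) NQ, g ((j:ℤ) + (l:ℤ) - 1 - t) j l := by
    rw [Finset.sum_comm]
    refine Finset.sum_congr rfl fun j _ => ?_
    rw [Finset.sum_comm]
    refine Finset.sum_congr rfl fun l _ => ?_
    have e1 : ∑ i ∈ Finset.Icc (-1 - NQ) NP, g i j l = ∑ᶠ i : ℤ, g i j l := by
      refine (finsum_eq_finset_sum_of_support_subset _ ?_).symm
      intro i hi
      simp only [Function.mem_support] at hi
      by_contra hmem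
      simp only [Finset.coe_Icc, Set.mem_Icc, not_and_or, not_le] at hmem
      rcases hmem with h | h
      · exact hi (hgQ i j l (by omega))
      · exact hi (hgP i j l h)
    have e2' : ∑ᶠ t : ℤ, g ((Equiv.subLeft ((j:ℤ) + (l:ℤ) - 1)) t) j l = ∑ᶠ i : ℤ, g i j l :=
      finsum_comp_equiv (Equiv.subLeft ((j:ℤ) + (l:ℤ) - 1)) (f := fun i => g i j l)
    simp only [Equiv.subLeft_apply] at e2'
    have e3 : ∑ᶠ t : ℤ, g ((j:ℤ) + (l:ℤ) - 1 - t) j l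
        = ∑ t ∈ Finset.Icc (-1 - NP) NQ, g ((j:ℤ) + (l:ℤ) - 1 - t) j l := by
      refine finsum_eq_finset_sum_of_support_subset _ ?_
      intro t ht
      simp only [Function.mem_support] at ht
      by_contra hmem
      simp only [Finset.coe_Icc, Set.mem_Icc, not_and_or, not_le] at hmem
      rcases hmem with h | h
      · exact ht (hgP _ j l (by omega))
      · exact ht (hgQ _ j l (by omega))
    rw [e1, ← e2', e3]
  have swap2 : (∑ j ∈ Finset.range L, ∑ l ∈ Finset.range L,
        ∑ t ∈ Finset.Icc (-1 - NP) NQ, g ((j:ℤ) + (l:ℤ) - 1 - t) j l)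
      = ∑ t ∈ Finset.Icc (-1 - NP) NQ, ∑ j ∈ Finset.range L, ∑ l ∈ Finset.range L,
          g ((j:ℤ) + (l:ℤ) - 1 - t) j l := by
    have c1 : ∀ j ∈ Finset.range L,
        (∑ l ∈ Finset.range L, ∑ t ∈ Finset.Icc (-1 - NP) NQ, g ((j:ℤ) + (l:ℤ) - 1 - t) j l)
          = ∑ t ∈ Finset.Icc (-1 - NP) NQ, ∑ l ∈ Finset.range L, g ((j:ℤ) + (l:ℤ) - 1 - t) j l :=
      fun j _ => Finset.sum_comm
    rw [Finset.sum_congr rfl c1, Finset.sum_comm]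
  have stepC : ∀ t ∈ Finset.Icc (-1 - NP) NQ,
      (∑ j ∈ Finset.range L, ∑ l ∈ Finset.range L, g ((j:ℤ) + (l:ℤ) - 1 - t) j l)
        = (((-1 : ℤˣ) ^ t : ℤˣ) : ℤ) • (P.coeff (-1 - t) * Q.coeff t) := by
    intro t ht
    have htQ : t ≤ NQ := (Finset.mem_Icc.mp ht).2
    rw [← Finset.sum_product']
    set ψ : (Σ _ : ℕ, ℕ) → R := fun q =>
      (zchoose ((q.1:ℤ) - 1 - t) q.2 * zchoose t (q.1 - q.2)) •
        ((((-1 : ℤˣ) ^ t : ℤˣ) : ℤ) • (P.coeff ((q.1:ℤ) - 1 - t) * (⇑d)^[q.1] (Q.coeff t)))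
      with hψ
    have hval : ∀ (j l : ℕ), g ((j:ℤ) + (l:ℤ) - 1 - t) j l = ψ ⟨j + l, j⟩ := by
      intro j l
      simp only [hgdef, hψ]
      have e1 : (j:ℤ) + (l:ℤ) - 1 - ((j:ℤ) + (l:ℤ) - 1 - t) = t := by ring
      rw [e1]
      have e2 : (((j + l : ℕ) : ℤ)) = (j:ℤ) + (l:ℤ) := by push_cast; ring
      have e3 : j + l - j = l := by omega
      simp only [e2, e3]
      rw [smul_smul, smul_smul, mul_comm]
    have hψzero : ∀ q1 q2 : ℕ, NP + 1 + t < (q1:ℤ) → ψ ⟨q1, q2⟩ = 0 := by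
      intro q1 q2 hq
      show (zchoose ((q1:ℤ) - 1 - t) q2 * zchoose t (q1 - q2)) •
        ((((-1 : ℤˣ) ^ t : ℤˣ) : ℤ) • (P.coeff ((q1:ℤ) - 1 - t) * (⇑d)^[q1] (Q.coeff t))) = 0
      rw [hP _ (by omega), zero_mul, smul_zero, smul_zero]
    have hbij : (∑ p ∈ Finset.range L ×ˢ Finset.range L, g ((p.1:ℤ) + (p.2:ℤ) - 1 - t) p.1 p.2)
        = ∑ q ∈ (Finset.range (2*L)).sigma (fun s => Finset.range (s+1)), ψ q := by
      refine Finset.sum_bij_ne_zero (fun p _ _ => (⟨p.1 + p.2, p.1⟩ : Σ _ : ℕ, ℕ)) ?_ ?_ ?_ ?_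
      · intro p hmem hne
        obtain ⟨h1, h2⟩ := Finset.mem_product.mp hmem
        rw [Finset.mem_range] at h1 h2
        simp only [Finset.mem_sigma, Finset.mem_range]
        omega
      · intro p1 h11 h12 p2 h21 h22 heq
        simp only [Sigma.mk.inj_iff, heq_eq_eq] at heq
        exact Prod.ext heq.2 (by omega)
      · rintro ⟨q1, q2⟩ hq hne
        simp only [Finset.mem_sigma, Finset.mem_range] at hq
        obtain ⟨hq1, hq2⟩ := hq
        have hs1 : (q1:ℤ) ≤ NP + 1 + t := by
          by_contra hcon
          exact hne (hψzero q1 q2 (by omega))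
        have hjlt : q2 < L := by omega
        have hllt : q1 - q2 < L := by omega
        have he : ((⟨q2 + (q1 - q2), q2⟩ : Σ _ : ℕ, ℕ)) = (⟨q1, q2⟩ : Σ _ : ℕ, ℕ) := by
          have e : q2 + (q1 - q2) = q1 := by omega
          rw [e]
        refine ⟨(q2, q1 - q2),
          Finset.mem_product.mpr ⟨Finset.mem_range.mpr hjlt, Finset.mem_range.mpr hllt⟩, ?_, ?_⟩
        · show g ((q2:ℤ) + ((q1 - q2 : ℕ):ℤ) - 1 - t) q2 (q1 - q2) ≠ 0
          rw [hval q2 (q1 - q2), he]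
          exact hne
        · show (⟨q2 + (q1 - q2), q2⟩ : Σ _ : ℕ, ℕ) = (⟨q1, q2⟩ : Σ _ : ℕ, ℕ)
          exact he
      · intro p h1 h2
        exact hval p.1 p.2
    rw [hbij, Finset.sum_sigma]
    have inner : ∀ s ∈ Finset.range (2*L),
        (∑ j ∈ Finset.range (s+1), ψ ⟨s, j⟩)
          = zchoose ((s:ℤ) - 1) s •
              ((((-1:ℤˣ) ^ t : ℤˣ) : ℤ) • (P.coeff ((s:ℤ) - 1 - t) * (⇑d)^[s] (Q.coeff t))) := by
      intro s _
      have hbody : (∑ j ∈ Finset.range (s+1), ψ ⟨s, j⟩)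
          = ∑ j ∈ Finset.range (s+1), (zchoose ((s:ℤ) - 1 - t) j * zchoose t (s - j)) •
              ((((-1:ℤˣ) ^ t : ℤˣ) : ℤ) • (P.coeff ((s:ℤ) - 1 - t) * (⇑d)^[s] (Q.coeff t))) := rfl
      rw [hbody, ← Finset.sum_smul]
      have hv2 : (∑ j ∈ Finset.range (s+1), zchoose ((s:ℤ) - 1 - t) j * zchoose t (s - j))
          = zchoose ((s:ℤ) - 1) s := by
        have h := zvandermonde ((s:ℤ) - 1 - t) t s
        unfold zSm at h
        rwa [show (s:ℤ) - 1 - t + t = (s:ℤ) - 1 from by ring] at h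
      rw [hv2]
    rw [Finset.sum_congr rfl inner]
    rw [Finset.sum_eq_single 0]
    · have e0 : ((0:ℕ):ℤ) - 1 = -1 := by simp
      have e1 : ((0:ℕ):ℤ) - 1 - t = -1 - t := by simp
      rw [e1, e0, zchoose_zero_right, one_smul, Function.iterate_zero, id_eq]
    · intro s _ hs0
      rw [zchoose_diag s hs0, zero_smul]
    · intro habs
      exact absurd (Finset.mem_range.mpr (by omega)) habs
  rw [main1, swap1, swap2, Finset.sum_congr rfl stepC]
  refine (finsum_eq_finset_sum_of_support_subset _ ?_).symm
  intro t ht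
  simp only [Function.mem_support] at ht
  by_contra hmem
  simp only [Finset.coe_Icc, Set.mem_Icc, not_and_or, not_le] at hmem
  rcases hmem with h | h
  · exact ht (by rw [hP _ (by omega), zero_mul, smul_zero])
  · exact ht (by rw [hQ _ h, mul_zero, smul_zero])

lemma adj_Bseq_succ (B : PDO R) (k : ℕ) (n : ℤ) :
    (adj d (Bseq d B (k+1))).coeff n = -((adj d (Bseq d B k)).coeff (n-1)) := by
  obtain ⟨ND, hD⟩ := (Bseq d B k).bdd
  have hcoeff : ∀ m : ℤ, (Bseq d B (k+1)).coeff m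
      = d ((Bseq d B k).coeff m) + (Bseq d B k).coeff (m-1) := by
    intro m
    show (dC d (Bseq d B k)).coeff m + (mul d (Bseq d B k) (Dpow 1)).coeff m = _
    rw [mul_Dpow_coeff]
    rfl
  have hbdd1 : ∀ m, ND + 1 < m → (Bseq d B (k+1)).coeff m = 0 := by
    intro m hm
    rw [hcoeff, hD _ (by omega), hD _ (by omega)]
    simp
  set M' : ℕ := (ND - n + 2).toNat with hM'
  have hM1 : ND - n + 2 ≤ (M' : ℤ) := by simp only [hM']; omega
  rw [adj_coeff_eq_sum d _ hbdd1 n (L := M' + 1) (by push_cast; omega),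
      adj_coeff_eq_sum d _ hD (n-1) (L := M' + 1) (by push_cast; omega)]
  set u : ℕ → R := fun j => (((-1:ℤˣ) ^ (n + (j:ℤ)) : ℤˣ) : ℤ) •
    (zchoose (n + (j:ℤ)) j • (⇑d)^[j+1] ((Bseq d B k).coeff (n + (j:ℤ)))) with hu
  set v : ℕ → R := fun j => (((-1:ℤˣ) ^ (n + (j:ℤ)) : ℤˣ) : ℤ) •
    (zchoose (n + (j:ℤ)) j • (⇑d)^[j] ((Bseq d B k).coeff (n + (j:ℤ) - 1))) with hv
  set y : ℕ → R := fun j => (((-1:ℤˣ) ^ (n - 1 + (j:ℤ)) : ℤˣ) : ℤ) •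
    (zchoose (n - 1 + (j:ℤ)) j • (⇑d)^[j] ((Bseq d B k).coeff (n - 1 + (j:ℤ)))) with hy
  have hLHS : ∀ j ∈ Finset.range (M'+1),
      (((-1:ℤˣ) ^ (n + (j:ℤ)) : ℤˣ) : ℤ) •
        (zchoose (n + (j:ℤ)) j • (⇑d)^[j] ((Bseq d B (k+1)).coeff (n + (j:ℤ))))
        = u j + v j := by
    intro j _
    rw [hcoeff (n + (j:ℤ)), dIter_add, ← Function.iterate_succ_apply, smul_add, smul_add]
  have hRHS : (∑ j ∈ Finset.range (M'+1),
      (((-1:ℤˣ) ^ (n - 1 + (j:ℤ)) : ℤˣ) : ℤ) •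
        (zchoose (n - 1 + (j:ℤ)) j • (⇑d)^[j] ((Bseq d B k).coeff (n - 1 + (j:ℤ)))))
      = ∑ j ∈ Finset.range (M'+1), y j := by
    exact Finset.sum_congr rfl fun j _ => rfl
  rw [Finset.sum_congr rfl hLHS, hRHS, Finset.sum_add_distrib]
  have hx0 : v 0 + y 0 = 0 := by
    simp only [hv, hy, Nat.cast_zero, add_zero, Function.iterate_zero, id_eq,
      zchoose_zero_right, one_smul]
    have hs := sgn_succ (n - 1)
    rw [show n - 1 + 1 = n from by ring] at hs
    rw [hs, neg_smul, neg_add_cancel]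
  have hxs : ∀ j : ℕ, v (j+1) + y (j+1) = -(u j) := by
    intro j
    simp only [hv, hy, hu]
    push_cast
    have e1 : n + ((j:ℤ) + 1) - 1 = n + (j:ℤ) := by ring
    have e3 : n - 1 + ((j:ℤ) + 1) = n + (j:ℤ) := by ring
    have e2 : n + ((j:ℤ) + 1) = n + (j:ℤ) + 1 := by ring
    rw [e1, e3, e2]
    have hp : zchoose (n + (j:ℤ) + 1) (j+1)
        = zchoose (n + (j:ℤ)) (j+1) + zchoose (n + (j:ℤ)) j := by
      have h := zchoose_pascal (n + (j:ℤ) + 1) j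
      rwa [show n + (j:ℤ) + 1 - 1 = n + (j:ℤ) from by ring] at h
    rw [hp, sgn_succ]
    simp only [zsmul_eq_mul]
    push_cast
    ring
  have huM : u M' = 0 := by
    simp only [hu]
    rw [hD _ (by omega), dIter_zero, smul_zero, smul_zero]
  have hsum : (∑ j ∈ Finset.range (M'+1), v j) + (∑ j ∈ Finset.range (M'+1), y j)
      = -(∑ j ∈ Finset.range (M'+1), u j) := by
    rw [← Finset.sum_add_distrib]
    rw [Finset.sum_range_succ' (fun j => v j + y j) M']
    rw [hx0, add_zero]
    rw [Finset.sum_congr rfl (fun j _ => hxs j)]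
    rw [Finset.sum_range_succ (fun j => u j) M']
    rw [huM, add_zero]
    rw [Finset.sum_neg_distrib]
  have final := hsum
  rw [eq_comm, neg_eq_iff_add_eq_zero] at final
  rw [eq_comm, neg_eq_iff_add_eq_zero]
  calc (∑ j ∈ Finset.range (M'+1), y j) + ((∑ j ∈ Finset.range (M'+1), u j)
          + (∑ j ∈ Finset.range (M'+1), v j))
      = ((∑ j ∈ Finset.range (M'+1), u j) + (∑ j ∈ Finset.range (M'+1), v j))
          + (∑ j ∈ Finset.range (M'+1), y j) := by ring
    _ = 0 := by
        rw [add_assoc, hsum]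
        exact add_neg_cancel _
  

lemma adj_Bseq (B : PDO R) (k : ℕ) (n : ℤ) :
    (adj d (Bseq d B k)).coeff n = ((-1)^k : ℤ) • (adj d B).coeff (n - (k:ℤ)) := by
  induction k generalizing n with
  | zero => simp [Bseq]
  | succ k ih =>
    rw [show Bseq d B (k+1) = Bseq d B (k+1) from rfl]
    rw [adj_Bseq_succ d B k n, ih (n-1)]
    have e : n - 1 - (k:ℤ) = n - ((k:ℕ)+1:ℤ) := by ring
    rw [e]
    rw [← neg_smul]
    congr 1
    rw [pow_succ]
    ring

lemma mul_shift (P Q Q' : PDO R) {NP NQ : ℤ}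
    (hP : ∀ n, NP < n → P.coeff n = 0) (hQ : ∀ n, NQ < n → Q.coeff n = 0)
    (c : ℤ) (sft : ℤ) (hQ' : ∀ t2, Q'.coeff t2 = c • Q.coeff (t2 - sft)) (m : ℤ) :
    (mul d P Q').coeff m = c • (mul d P Q).coeff (m - sft) := by
  have hQ'b : ∀ t2, NQ + sft < t2 → Q'.coeff t2 = 0 := by
    intro t2 h
    rw [hQ', hQ _ (by omega), smul_zero]
  set T : Finset (ℤ × ℕ) :=
    Finset.Icc (m - sft - NQ) NP ×ˢ Finset.range ((NQ - m + sft + NP + 1).toNat + 1) with hT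
  have hmem : ∀ (i:ℤ) (j:ℕ), i ≤ NP → m - i + (j:ℤ) ≤ NQ + sft → (i, j) ∈ T := by
    intro i j h1 h2
    refine Finset.mem_product.mpr
      ⟨Finset.mem_Icc.mpr ⟨by omega, h1⟩, Finset.mem_range.mpr (by omega)⟩
  rw [mul_coeff_eq_sum d P Q' hP hQ'b m hmem]
  rw [mul_coeff_eq_sum d P Q hP hQ (m - sft) (s := T)
    (fun i j h1 h2 => hmem i j h1 (by omega))]
  rw [Finset.smul_sum]
  refine Finset.sum_congr rfl fun p hp => ?_
  rw [hQ' (m - p.1 + p.2)]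
  rw [show m - p.1 + (p.2:ℤ) - sft = m - sft - p.1 + p.2 from by ring]
  rw [dIter_smul, smul_smul, mul_comm (zchoose p.1 p.2) c, ← smul_smul, mul_smul_comm]

end PDO
end ExtendedDToda

open ExtendedDToda ExtendedDToda.PDO in
/-- `Res_{z=0} dz (A(y,∂)(e^{yz}) · B(y',∂')(e^{-y'z})) = (A·B^*·∂)(y-y')^0`,
where the left-hand side is computed by Taylor expanding at `y' = y` and both
sides are read as formal power series in `y - y'`: the coefficient of
`(y-y')^k` on the left is `((-1)^k/k!)·Res_z(A(e^{yz})·B_k(e^{-yz}))`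
(with `B_k` the iterated total `y`-derivative of the second factor, and the
`z`-residue written out as a finite sum of products of coefficients), while on
the right `(P·∂)(y-y')^0 := Σ_{k≥0} (P·∂)_{-k} (y-y')^k/k!`. -/
theorem statement3 {R : Type} [CommRing R] [Algebra ℚ R]
    (d : Derivation ℤ R R) (A B : PDO R) :
    ∀ k : ℕ,
      (((-1 : ℚ) ^ k / (k.factorial : ℚ)) •
        (∑ᶠ j : ℤ, (((-1 : ℤˣ) ^ j : ℤˣ) : ℤ) •
          (A.coeff (-1 - j) * (Bseq d B k).coeff j)))
      = ((k.factorial : ℚ)⁻¹) •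
          (mul d (mul d A (adj d B)) (Dpow 1)).coeff (-(k : ℤ)) := by
  intro k
  obtain ⟨NA, hA⟩ := A.bdd
  obtain ⟨NB, hB⟩ := B.bdd
  have h1 : (∑ᶠ j : ℤ, (((-1 : ℤˣ) ^ j : ℤˣ) : ℤ) • (A.coeff (-1 - j) * (Bseq d B k).coeff j))
      = (mul d A (adj d (Bseq d B k))).coeff (-1) := (res_pair d A (Bseq d B k)).symm
  have h2 : (mul d A (adj d (Bseq d B k))).coeff (-1)
      = ((-1)^k : ℤ) • (mul d A (adj d B)).coeff (-1 - (k:ℤ)) :=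
    mul_shift d A (adj d B) (adj d (Bseq d B k)) hA (adj_coeff_bound d B hB)
      ((-1)^k) (k:ℤ) (fun t => adj_Bseq d B k t) (-1)
  have h3 : (mul d (mul d A (adj d B)) (Dpow 1)).coeff (-(k:ℤ))
      = (mul d A (adj d B)).coeff (-(k:ℤ) - 1) := mul_Dpow_coeff d _ _
  rw [h1, h2, h3, show (-1 : ℤ) - (k:ℤ) = -(k:ℤ) - 1 from by ring]
  rw [← Int.cast_smul_eq_zsmul ℚ ((-1)^k) ((mul d A (adj d B)).coeff (-(k:ℤ) - 1)), smul_smul]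
  congr 1
  push_cast
  rw [div_mul_eq_mul_div, ← mul_pow]
  norm_num
end

section
/- Let R be a commutative differential ring. For every pseudodifferential operator P = ∂² + p_1∂ + p_0 + p_{-1}∂^{-1} + p_{-2}∂^{-2} + ⋯ of order 2 with leading coefficient 1, and assuming 2 is invertible in R, there exists a unique pseudodifferential operator L = ∂ + b_0 + b_1∂^{-1} + b_2∂^{-2} + ⋯ of order 1 with leading coefficient 1 such that L² = P. In particular, if p_1 = 0 then b_0 = 0. -/
namespace Aux9
open ExtendedDToda ExtendedDToda.PDO Finset

variable {R : Type} [CommRing R] (d : Derivation ℤ R R)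

lemma zchoose_zero (n : ℤ) : zchoose n 0 = 1 := by
  unfold zchoose; split <;> simp

lemma iter_d_zero (k : ℕ) : (⇑d)^[k] (0:R) = 0 :=
  Function.iterate_fixed (by simp) k

noncomputable def term (L M : PDO R) (n : ℤ) (p : ℤ × ℕ) : R :=
  L.coeff p.1 * (zchoose p.1 p.2 • (⇑d)^[p.2] (M.coeff (n - p.1 + p.2)))

lemma mul_coeff (L M : PDO R) (n : ℤ) :
    (mul d L M).coeff n = ∑ᶠ p : ℤ × ℕ, term d L M n p := rfl

lemma term_zero_left {L M : PDO R} {n : ℤ} {p : ℤ × ℕ} (h : L.coeff p.1 = 0) :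
    term d L M n p = 0 := by simp [term, h]

lemma term_zero_right {L M : PDO R} {n : ℤ} {p : ℤ × ℕ}
    (h : M.coeff (n - p.1 + p.2) = 0) : term d L M n p = 0 := by
  simp [term, h, iter_d_zero]

/-- The finite index set for coefficient `n` of a product of two operators of order ≤ 1. -/
noncomputable def S (n : ℤ) : Finset (ℤ × ℕ) := Icc (n-1) 1 ×ˢ range (3-n).toNat

lemma mul_coeff_fin {L M : PDO R} (hL : ∀ m : ℤ, 1 < m → L.coeff m = 0)
    (hM : ∀ m : ℤ, 1 < m → M.coeff m = 0) (n : ℤ) :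
    (mul d L M).coeff n = ∑ p ∈ S n, term d L M n p := by
  rw [mul_coeff]
  apply finsum_eq_sum_of_support_subset
  intro p hp
  have h1 : p.1 ≤ 1 := by
    by_contra h
    exact hp (term_zero_left d (hL _ (by omega)))
  have h2 : n - p.1 + p.2 ≤ 1 := by
    by_contra h
    exact hp (term_zero_right d (hM _ (by omega)))
  simp only [S, coe_product, Set.mem_prod, mem_coe, mem_Icc, mem_range]
  have : (0:ℤ) ≤ p.2 := Int.ofNat_nonneg p.2
  refine ⟨⟨by omega, h1⟩, by omega⟩


lemma term_special1 (L M : PDO R) (n : ℤ) :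
    term d L M n (n-1, 0) = L.coeff (n-1) * M.coeff 1 := by
  have h : n - (n-1) + ((0:ℕ):ℤ) = 1 := by push_cast; ring
  simp [term, zchoose_zero, h]

lemma term_special2 (L M : PDO R) (n : ℤ) :
    term d L M n (1, 0) = L.coeff 1 * M.coeff (n-1) := by
  have h : n - 1 + ((0:ℕ):ℤ) = n - 1 := by push_cast; ring
  simp [term, zchoose_zero, h]

lemma mul_coeff_split {L M : PDO R} (hL : ∀ m : ℤ, 1 < m → L.coeff m = 0)
    (hM : ∀ m : ℤ, 1 < m → M.coeff m = 0) {n : ℤ} (hn : n ≤ 1) :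
    (mul d L M).coeff n = L.coeff (n-1) * M.coeff 1 + L.coeff 1 * M.coeff (n-1)
      + ∑ p ∈ S n \ {(n-1, 0), (1, 0)}, term d L M n p := by
  rw [mul_coeff_fin d hL hM n]
  have hsub : ({(n-1, 0), (1, 0)} : Finset (ℤ × ℕ)) ⊆ S n := by
    intro p hp
    simp only [mem_insert, mem_singleton] at hp
    simp only [S, mem_product, mem_Icc, mem_range]
    rcases hp with h | h <;> subst h <;> constructor <;> simp <;> omega
  have hne : ((n-1 : ℤ), (0:ℕ)) ≠ ((1:ℤ), (0:ℕ)) := by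
    intro h; rw [Prod.mk.injEq] at h; omega
  rw [← Finset.sum_sdiff hsub, Finset.sum_pair hne, term_special1, term_special2]
  ring

/-- Terms in the residual sum only depend on coefficients at indices ≥ n. -/
lemma term_congr {L L' M M' : PDO R} {n : ℤ}
    (hM : ∀ m : ℤ, 1 < m → M.coeff m = 0) (hM' : ∀ m : ℤ, 1 < m → M'.coeff m = 0)
    (hLa : ∀ m : ℤ, n ≤ m → L.coeff m = L'.coeff m)
    (hMa : ∀ m : ℤ, n ≤ m → M.coeff m = M'.coeff m)
    {p : ℤ × ℕ} (hp : p ∈ S n \ {(n-1, 0), (1, 0)}) :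
    term d L M n p = term d L' M' n p := by
  simp only [mem_sdiff, S, mem_product, mem_Icc, mem_range, mem_insert, mem_singleton,
    Prod.mk.injEq, not_or, not_and] at hp
  obtain ⟨⟨⟨hk1, hk2⟩, hj⟩, h1, h2⟩ := hp
  by_cases hk : p.1 = n - 1
  · -- then p.2 ≥ 1 and the inner coefficient index is 1 + p.2 > 1, so both are 0
    have hj1 : 1 ≤ p.2 := by
      rcases Nat.eq_zero_or_pos p.2 with h | h
      · exact absurd (Prod.ext hk h) h1
      · exact h
    have harg : (1:ℤ) < n - p.1 + p.2 := by omega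
    rw [term_zero_right d (hM _ harg), term_zero_right d (hM' _ harg)]
  · -- then p.1 ≥ n; and the inner index is ≥ n as well
    have hk3 : n ≤ p.1 := by omega
    have harg : n ≤ n - p.1 + p.2 := by
      by_cases h11 : p.1 = 1
      · have : 1 ≤ p.2 := by
          rcases Nat.eq_zero_or_pos p.2 with h | h
          · exact absurd (Prod.ext h11 h) h2
          · exact h
        omega
      · have : p.1 ≤ 0 := by omega
        have : (0:ℤ) ≤ p.2 := Int.ofNat_nonneg p.2
        omega
    rw [term, term, hLa _ hk3, hMa _ harg]

/-- Key locality/comparison lemma for squares. -/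
lemma key {L L' : PDO R} (hL : ∀ m : ℤ, 1 < m → L.coeff m = 0)
    (hL' : ∀ m : ℤ, 1 < m → L'.coeff m = 0)
    (hagree : ∀ m : ℤ, n ≤ m → L.coeff m = L'.coeff m) (hn : n ≤ 1) :
    (mul d L L).coeff n =
      (mul d L' L').coeff n + (L.coeff 1 + L'.coeff 1) * (L.coeff (n-1) - L'.coeff (n-1)) := by
  rw [mul_coeff_split d hL hL hn, mul_coeff_split d hL' hL' hn,
    Finset.sum_congr rfl (fun p hp => term_congr d hL hL' hagree hagree hp),
    hagree 1 hn]
  ring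


variable [Invertible (2:R)] (P : PDO R)

/-- Truncated approximations to the square root: `trunc i` carries the
coefficients `b_0, …, b_i` at positions `1, 0, …, 1-i` and is zero elsewhere. -/
noncomputable def trunc : ℕ → PDO R
  | 0 => ⟨fun m => if m = 1 then (1:R) else 0, ⟨1, fun m hm => if_neg (by omega)⟩⟩
  | (i+1) =>
    let T := trunc i
    ⟨fun m => if m = -(i:ℤ) then
        ⅟(2:R) * (P.coeff (1 - (i:ℤ)) - (mul d T T).coeff (1 - (i:ℤ)))
      else T.coeff m,
     by
      obtain ⟨N, hN⟩ := T.bdd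
      exact ⟨max N 0, fun m hm => by
        beta_reduce
        rw [if_neg (by omega), hN m (by omega)]⟩⟩

lemma trunc_top : ∀ i : ℕ, ∀ m : ℤ, 1 < m → (trunc d P i).coeff m = 0
  | 0, m, hm => if_neg (by omega)
  | (i+1), m, hm => by
    show (if m = -(i:ℤ) then _ else (trunc d P i).coeff m) = 0
    rw [if_neg (by omega), trunc_top i m hm]

lemma trunc_one : ∀ i : ℕ, (trunc d P i).coeff 1 = 1
  | 0 => by
    show (if (1:ℤ) = 1 then (1:R) else 0) = 1
    rw [if_pos rfl]
  | (i+1) => by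
    show (if (1:ℤ) = -(i:ℤ) then _ else (trunc d P i).coeff 1) = 1
    rw [if_neg (by omega), trunc_one i]

lemma trunc_low : ∀ i : ℕ, ∀ m : ℤ, m < 1 - (i:ℤ) → (trunc d P i).coeff m = 0
  | 0, m, hm => if_neg (by omega)
  | (i+1), m, hm => by
    show (if m = -(i:ℤ) then _ else (trunc d P i).coeff m) = 0
    have : ((i:ℤ)+1 : ℤ) = ((i+1 : ℕ) : ℤ) := by push_cast; ring
    rw [if_neg (by push_cast at hm ⊢; omega), trunc_low i m (by push_cast at hm ⊢; omega)]

lemma trunc_stable : ∀ i j : ℕ, i ≤ j → ∀ m : ℤ, 1 - (i:ℤ) ≤ m →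
    (trunc d P j).coeff m = (trunc d P i).coeff m := by
  intro i j
  induction j with
  | zero => intro hij m _; interval_cases i; rfl
  | succ j ih =>
    intro hij m hm
    rcases Nat.lt_or_ge i (j+1) with h | h
    · have hij' : i ≤ j := by omega
      show (if m = -(j:ℤ) then _ else (trunc d P j).coeff m) = _
      rw [if_neg (by push_cast at hm ⊢; omega), ih hij' m hm]
    · have : i = j + 1 := by omega
      subst this; rfl

/-- The square root operator. -/
noncomputable def sqrtL : PDO R :=
  ⟨fun m => (trunc d P (1 - m).toNat).coeff m,
   ⟨1, fun m hm => trunc_top d P _ m hm⟩⟩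

lemma sqrtL_eq_trunc (i : ℕ) (m : ℤ) (hm : 1 - (i:ℤ) ≤ m) :
    (sqrtL d P).coeff m = (trunc d P i).coeff m := by
  show (trunc d P (1 - m).toNat).coeff m = (trunc d P i).coeff m
  have h1 : (1 - m).toNat ≤ i := by omega
  have h2 : 1 - ((1 - m).toNat : ℤ) ≤ m := by omega
  rw [trunc_stable d P (1-m).toNat i h1 m h2]

lemma sqrtL_one : (sqrtL d P).coeff 1 = 1 := by
  rw [sqrtL_eq_trunc d P 0 1 (by norm_num), trunc_one]

lemma sqrtL_top (m : ℤ) (hm : 1 < m) : (sqrtL d P).coeff m = 0 :=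
  trunc_top d P _ m hm


lemma PDO.ext' {A B : PDO R} (h : ∀ n : ℤ, A.coeff n = B.coeff n) : A = B := by
  cases A; cases B
  simp only [PDO.mk.injEq]
  exact funext h

lemma sqrtL_step (i : ℕ) :
    (sqrtL d P).coeff (-(i:ℤ)) =
      ⅟(2:R) * (P.coeff (1 - (i:ℤ))
        - (mul d (trunc d P i) (trunc d P i)).coeff (1 - (i:ℤ))) := by
  rw [sqrtL_eq_trunc d P (i+1) (-(i:ℤ)) (by push_cast; omega)]
  show (if -(i:ℤ) = -(i:ℤ) then _ else (trunc d P i).coeff (-(i:ℤ))) = _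
  rw [if_pos rfl]

lemma sqrtL_sq (hP2 : P.coeff 2 = 1) (hPtop : ∀ n : ℤ, 2 < n → P.coeff n = 0)
    (n : ℤ) : (mul d (sqrtL d P) (sqrtL d P)).coeff n = P.coeff n := by
  have hLtop := sqrtL_top d P
  have hL1 := sqrtL_one d P
  rcases lt_trichotomy n 2 with hn | hn | hn
  · -- main case n ≤ 1
    have hn1 : n ≤ 1 := by omega
    obtain ⟨i, hi⟩ : ∃ i : ℕ, n = 1 - (i:ℤ) := ⟨(1-n).toNat, by omega⟩
    subst hi
    have hTtop := trunc_top d P i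
    have hagree : ∀ m : ℤ, 1 - (i:ℤ) ≤ m →
        (sqrtL d P).coeff m = (trunc d P i).coeff m :=
      fun m hm => sqrtL_eq_trunc d P i m hm
    rw [key d hLtop hTtop hagree hn1, hL1, trunc_one d P i]
    have hTlow : (trunc d P i).coeff (1 - (i:ℤ) - 1) = 0 := trunc_low d P i _ (by omega)
    have hstep : (sqrtL d P).coeff (1 - (i:ℤ) - 1) =
        ⅟(2:R) * (P.coeff (1 - (i:ℤ))
          - (mul d (trunc d P i) (trunc d P i)).coeff (1 - (i:ℤ))) := by
      have h : 1 - (i:ℤ) - 1 = -(i:ℤ) := by ring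
      rw [h, sqrtL_step]
    have key2 : ∀ x : R, (1 + 1) * (⅟(2:R) * x) = x := fun x => by
      rw [show (1+1:R) = 2 by norm_num, ← mul_assoc, mul_invOf_self, one_mul]
    rw [hTlow, hstep, sub_zero, key2]
    ring
  · -- n = 2
    subst hn
    rw [mul_coeff_fin d hLtop hLtop 2, hP2]
    have hS : S 2 = {((1:ℤ), (0:ℕ))} := by
      show Icc (1:ℤ) 1 ×ˢ range (3-2:ℤ).toNat = _
      norm_num [Finset.Icc_self]
    rw [hS, Finset.sum_singleton, term_special2 d _ _ 2,
      show (2:ℤ) - 1 = 1 by norm_num, hL1, one_mul]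
  · -- n > 2 : empty sum
    rw [mul_coeff_fin d hLtop hLtop n, hPtop n hn]
    have hS : S n = ∅ := by
      have h : (3 - n).toNat = 0 := by omega
      simp [S, h]
    rw [hS, Finset.sum_empty]


lemma two_mul_cancel {x y : R} (h : (1 + 1) * x = (1 + 1) * y) : x = y := by
  have h2 : (1 + 1 : R) = 2 := by norm_num
  rw [h2] at h
  calc x = ⅟(2:R) * (2 * x) := by rw [← mul_assoc, invOf_mul_self, one_mul]
    _ = ⅟(2:R) * (2 * y) := by rw [h]
    _ = y := by rw [← mul_assoc, invOf_mul_self, one_mul]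

lemma sq_unique {L L' : PDO R} (hL1 : L.coeff 1 = 1) (hLtop : ∀ m : ℤ, 1 < m → L.coeff m = 0)
    (hL'1 : L'.coeff 1 = 1) (hL'top : ∀ m : ℤ, 1 < m → L'.coeff m = 0)
    (hsq : mul d L L = mul d L' L') : L = L' := by
  have main : ∀ i : ℕ, ∀ m : ℤ, 1 - (i:ℤ) ≤ m → L.coeff m = L'.coeff m := by
    intro i
    induction i with
    | zero =>
      intro m hm
      rcases eq_or_lt_of_le (show (1:ℤ) ≤ m by omega) with h | h
      · rw [← h, hL1, hL'1]
      · rw [hLtop m h, hL'top m h]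
    | succ i ih =>
      intro m hm
      rcases lt_or_ge m (1 - (i:ℤ)) with h | h
      · have hmi : m = 1 - (i:ℤ) - 1 := by push_cast at hm; omega
        have hk := key d hLtop hL'top ih (show 1 - (i:ℤ) ≤ 1 by omega)
        rw [hsq, left_eq_add, hL1, hL'1] at hk
        have hxy : L.coeff (1 - (i:ℤ) - 1) - L'.coeff (1 - (i:ℤ) - 1) = 0 :=
          two_mul_cancel (by rw [mul_zero]; exact hk)
        rw [hmi]
        exact sub_eq_zero.mp hxy
      · exact ih m h
  apply PDO.ext'
  intro m
  exact main (1 - m).toNat m (by omega)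

lemma coeff_one_of_sq {L : PDO R} (hL1 : L.coeff 1 = 1)
    (hLtop : ∀ m : ℤ, 1 < m → L.coeff m = 0) :
    (mul d L L).coeff 1 = (1 + 1) * L.coeff 0 := by
  rw [mul_coeff_split d hLtop hLtop (le_refl 1), hL1]
  have hzero : ∀ p ∈ S 1 \ {((1:ℤ)-1, (0:ℕ)), ((1:ℤ), (0:ℕ))}, term d L L 1 p = 0 := by
    intro p hp
    simp only [mem_sdiff, S, mem_product, mem_Icc, mem_range, mem_insert, mem_singleton] at hp
    obtain ⟨⟨⟨hk1, hk2⟩, hj⟩, hne⟩ := hp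
    push_neg at hne
    obtain ⟨hne1, hne2⟩ := hne
    have hj2 : p.2 < 2 := by omega
    rcases (show p.1 = 0 ∨ p.1 = 1 by omega) with h1 | h1
    · have hp2 : p.2 = 1 := by
        rcases (show p.2 = 0 ∨ p.2 = 1 by omega) with h | h
        · exact absurd (Prod.ext (show p.1 = (1:ℤ)-1 by omega) h) hne1
        · exact h
      apply term_zero_right
      apply hLtop
      rw [h1, hp2]; norm_num
    · have hp2 : p.2 = 1 := by
        rcases (show p.2 = 0 ∨ p.2 = 1 by omega) with h | h
        · exact absurd (Prod.ext h1 h) hne2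
        · exact h
      obtain ⟨q1, q2⟩ := p
      simp only at h1 hp2
      subst h1; subst hp2
      unfold term
      simp only
      rw [show (1:ℤ) - 1 + ((1:ℕ):ℤ) = 1 by norm_num, hL1]
      rw [Function.iterate_one]
      rw [Derivation.map_one_eq_zero, smul_zero, mul_zero]
  rw [Finset.sum_eq_zero hzero, show (1:ℤ) - 1 = 0 by norm_num]
  ring

end Aux9


open ExtendedDToda ExtendedDToda.PDO in
/-- every monic pseudodifferential operator
`P = ∂² + p_1∂ + p_0 + p_{-1}∂^{-1} + ⋯` of order 2 has a unique monic square
root `L = ∂ + b_0 + b_1∂^{-1} + ⋯` of order 1 (2 invertible in `R`); moreover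
if `p_1 = 0` then `b_0 = 0`. -/
theorem statement9 {R : Type} [CommRing R] [Invertible (2 : R)]
    (d : Derivation ℤ R R) (P : PDO R)
    (hP2 : P.coeff 2 = 1) (hPtop : ∀ n : ℤ, 2 < n → P.coeff n = 0) :
    (∃! L : PDO R, L.coeff 1 = 1 ∧ (∀ n : ℤ, 1 < n → L.coeff n = 0) ∧
        mul d L L = P) ∧
    (∀ L : PDO R, L.coeff 1 = 1 → (∀ n : ℤ, 1 < n → L.coeff n = 0) →
        mul d L L = P → P.coeff 1 = 0 → L.coeff 0 = 0) := by
  constructor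
  · refine ⟨Aux9.sqrtL d P, ⟨Aux9.sqrtL_one d P, Aux9.sqrtL_top d P, ?_⟩, ?_⟩
    · exact Aux9.PDO.ext' (Aux9.sqrtL_sq d P hP2 hPtop)
    · rintro L ⟨hL1, hLtop, hLsq⟩
      exact Aux9.sq_unique d hL1 hLtop (Aux9.sqrtL_one d P) (Aux9.sqrtL_top d P)
        (by rw [hLsq, Aux9.PDO.ext' (Aux9.sqrtL_sq d P hP2 hPtop)])
  · intro L hL1 hLtop hLsq hP1
    have h := Aux9.coeff_one_of_sq d hL1 hLtop
    rw [hLsq, hP1] at h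
    have h0 : (1 + 1) * L.coeff 0 = (1 + 1) * (0:R) := by rw [mul_zero, ← h]
    exact Aux9.two_mul_cancel h0
end

section
/- Let R be a commutative differential ring in which 2 is invertible, and let A = 1 + a_1∂^{-1} + a_2∂^{-2} + ⋯ be a pseudodifferential operator of order 0 with leading coefficient 1. Then there exists a unique pseudodifferential operator B = 1 + b_1∂^{-1} + b_2∂^{-2} + ⋯ with B² = A. Moreover, if all coefficients a_i with odd index i vanish and every a_i is annihilated by ∂, then all odd-index b_j vanish and every b_j is annihilated by ∂. -/
namespace ExtendedDTodaAux

open ExtendedDToda ExtendedDToda.PDO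

variable {R : Type} [CommRing R]

lemma zchoose_zero' (n : ℤ) : zchoose n 0 = 1 := by
  unfold zchoose; split <;> simp

lemma zchoose_zero_pos {j : ℕ} (hj : 0 < j) : zchoose 0 j = 0 := by
  unfold zchoose; simp [Nat.choose_eq_zero_of_lt hj]

variable (d : Derivation ℤ R R)

/-- One term of the square expansion. -/
noncomputable def term (c : ℤ → R) (n : ℤ) (p : ℤ × ℕ) : R :=
  c p.1 * (zchoose p.1 p.2 • (⇑d)^[p.2] (c (n - p.1 + p.2)))

/-- The "lower order" part of the coefficient of `∂^n` in `B²`. -/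
noncomputable def Tval (c : ℤ → R) (n : ℤ) : R :=
  ∑ p ∈ (Finset.Ioo n 0) ×ˢ (Finset.range ((-n).toNat + 1)), term d c n p

lemma iter_zero (j : ℕ) : (⇑d)^[j] (0 : R) = 0 :=
  Function.iterate_fixed (by simp) j

lemma mul_coeff (B : PDO R) (n : ℤ) :
    (mul d B B).coeff n = ∑ᶠ p : ℤ × ℕ, term d B.coeff n p := rfl

lemma finsum_term (c : ℤ → R) (hpos : ∀ m : ℤ, 0 < m → c m = 0) (n : ℤ) :
    (∑ᶠ p : ℤ × ℕ, term d c n p) =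
      ∑ p ∈ (Finset.Icc n 0) ×ˢ (Finset.range ((-n).toNat + 1)), term d c n p := by
  apply finsum_eq_finset_sum_of_support_subset
  intro p hp
  simp only [Function.mem_support] at hp
  simp only [Finset.coe_product, Set.mem_prod, Finset.mem_coe, Finset.mem_Icc,
    Finset.mem_range]
  by_contra hmem
  apply hp
  unfold term
  by_cases h1 : 0 < p.1
  · rw [hpos _ h1, zero_mul]
  · have h2 : 0 < n - p.1 + p.2 := by push_neg at hmem h1; omega
    rw [hpos _ h2, iter_zero, smul_zero, mul_zero]

lemma sq_coeff_pos (c : ℤ → R) (hpos : ∀ m : ℤ, 0 < m → c m = 0)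
    (n : ℤ) (hn : 0 < n) :
    (∑ᶠ p : ℤ × ℕ, term d c n p) = 0 := by
  rw [finsum_term d c hpos n, Finset.Icc_eq_empty (by omega), Finset.empty_product,
    Finset.sum_empty]

lemma sq_coeff_zero (c : ℤ → R) (hpos : ∀ m : ℤ, 0 < m → c m = 0) :
    (∑ᶠ p : ℤ × ℕ, term d c 0 p) = c 0 * c 0 := by
  rw [finsum_term d c hpos 0]
  norm_num [Finset.Icc_self, Finset.range_one, Finset.singleton_product_singleton]
  simp [term, zchoose_zero']

lemma sq_coeff_neg (c : ℤ → R) (h0 : c 0 = 1) (hpos : ∀ m : ℤ, 0 < m → c m = 0)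
    (n : ℤ) (hn : n < 0) :
    (∑ᶠ p : ℤ × ℕ, term d c n p) = 2 * c n + Tval d c n := by
  rw [finsum_term d c hpos n, Finset.sum_product]
  have hins : Finset.Icc n (0 : ℤ) = insert n (insert 0 (Finset.Ioo n 0)) := by
    ext m
    simp only [Finset.mem_Icc, Finset.mem_insert, Finset.mem_Ioo]
    omega
  rw [hins, Finset.sum_insert (by simp only [Finset.mem_insert, Finset.mem_Ioo]; omega),
    Finset.sum_insert (by simp only [Finset.mem_Ioo]; omega)]
  have h1 : ∑ j ∈ Finset.range ((-n).toNat + 1), term d c n (n, j) = c n := by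
    rw [Finset.sum_eq_single_of_mem 0 (Finset.mem_range.2 (by omega))]
    · simp [term, zchoose_zero', h0]
    · intro j _ hj
      simp only [term]
      rw [show n - n + (j : ℤ) = j by ring, hpos (j : ℤ) (by omega), iter_zero, smul_zero,
        mul_zero]
  have h2 : ∑ j ∈ Finset.range ((-n).toNat + 1), term d c n (0, j) = c n := by
    rw [Finset.sum_eq_single_of_mem 0 (Finset.mem_range.2 (by omega))]
    · simp [term, zchoose_zero', h0]
    · intro j _ hj
      simp [term, zchoose_zero_pos (Nat.pos_of_ne_zero hj)]
  rw [h1, h2, ← Finset.sum_product]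
  unfold Tval
  ring

lemma Tval_congr (c c' : ℤ → R) (hpos : ∀ m : ℤ, 0 < m → c m = 0)
    (hpos' : ∀ m : ℤ, 0 < m → c' m = 0) (n : ℤ)
    (h : ∀ m : ℤ, n < m → m ≤ 0 → c m = c' m) :
    Tval d c n = Tval d c' n := by
  apply Finset.sum_congr rfl
  intro p hp
  simp only [Finset.mem_product, Finset.mem_Ioo, Finset.mem_range] at hp
  have e1 : c p.1 = c' p.1 := h _ hp.1.1 (le_of_lt hp.1.2)
  have e2 : c (n - p.1 + p.2) = c' (n - p.1 + p.2) := by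
    by_cases hm : n - p.1 + p.2 ≤ 0
    · exact h _ (by omega) hm
    · rw [hpos _ (by omega), hpos' _ (by omega)]
  unfold term
  rw [e1, e2]

lemma PDOext {P Q : PDO R} (h : ∀ n, P.coeff n = Q.coeff n) : P = Q := by
  cases P; cases Q; congr 1; funext n; exact h n

/-- Extend `f : ℕ → R` to `ℤ → R` supported on nonpositive integers. -/
def toC (f : ℕ → R) : ℤ → R := fun m => if 0 < m then 0 else f (-m).toNat

lemma toC_pos (f : ℕ → R) (m : ℤ) (hm : 0 < m) : toC f m = 0 := if_pos hm

lemma toC_nonpos (f : ℕ → R) (m : ℤ) (hm : m ≤ 0) : toC f m = f (-m).toNat :=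
  if_neg (by omega)

lemma toC_natneg (f : ℕ → R) (k : ℕ) : toC f (-(k : ℤ)) = f k := by
  rw [toC_nonpos _ _ (by omega)]
  congr 1
  omega

variable [Invertible (2 : R)] (A : PDO R)

/-- The recursively constructed coefficients of the square root, as a sequence
of partial coefficient lists. -/
noncomputable def blist : ℕ → ℕ → R
  | 0 => fun j => if j = 0 then 1 else 0
  | (k+1) => fun j =>
      if j ≤ k then blist k j
      else if j = k + 1 then
        ⅟(2:R) * (A.coeff (-(k+1 : ℕ)) - Tval d (toC (blist k)) (-(k+1 : ℕ)))
      else 0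

lemma blist_succ (k j : ℕ) : blist d A (k+1) j =
    if j ≤ k then blist d A k j
    else if j = k + 1 then
      ⅟(2:R) * (A.coeff (-(k+1 : ℕ)) - Tval d (toC (blist d A k)) (-(k+1 : ℕ)))
    else 0 := rfl

lemma blist_coh (k j : ℕ) (hjk : j ≤ k) : blist d A k j = blist d A j j := by
  induction k with
  | zero =>
    have : j = 0 := by omega
    subst this
    rfl
  | succ k ih =>
    by_cases h : j ≤ k
    · rw [blist_succ, if_pos h, ih h]
    · have hj : j = k + 1 := by omega
      subst hj
      rfl

lemma blist_zero : blist d A 0 0 = 1 := rfl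

lemma bc_rec (k : ℕ) (hk : 0 < k) :
    2 * toC (fun j => blist d A j j) (-(k : ℤ)) +
      Tval d (toC (fun j => blist d A j j)) (-(k : ℤ)) = A.coeff (-(k : ℤ)) := by
  obtain ⟨k, rfl⟩ : ∃ m, k = m + 1 := ⟨k - 1, by omega⟩
  rw [toC_natneg]
  have h1 : blist d A (k+1) (k+1) =
      ⅟(2:R) * (A.coeff (-(k+1 : ℕ)) - Tval d (toC (blist d A k)) (-(k+1 : ℕ))) := by
    rw [blist_succ, if_neg (by omega), if_pos rfl]
  have h2 : Tval d (toC (blist d A k)) (-(k+1 : ℕ)) =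
      Tval d (toC (fun j => blist d A j j)) (-(k+1 : ℕ)) := by
    apply Tval_congr
    · intro m hm; exact toC_pos _ _ hm
    · intro m hm; exact toC_pos _ _ hm
    · intro m hm1 hm2
      rw [toC_nonpos _ _ hm2, toC_nonpos _ _ hm2]
      exact blist_coh d A k _ (by omega)
  rw [h1, h2, ← mul_assoc, mul_invOf_self, one_mul]
  push_cast
  ring

end ExtendedDTodaAux

open ExtendedDToda ExtendedDToda.PDO in
/-- every pseudodifferential operator
`A = 1 + a_1∂^{-1} + a_2∂^{-2} + ⋯` of order 0 with leading coefficient 1 has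
a unique square root `B = 1 + b_1∂^{-1} + ⋯` of the same shape (2 invertible
in `R`); moreover if all odd-index coefficients of `A` vanish and every
coefficient of `A` is annihilated by `∂`, then the same holds for `B`. -/
theorem statement10 {R : Type} [CommRing R] [Invertible (2 : R)]
    (d : Derivation ℤ R R) (A : PDO R)
    (hA0 : A.coeff 0 = 1) (hAtop : ∀ n : ℤ, 0 < n → A.coeff n = 0) :
    (∃! B : PDO R, B.coeff 0 = 1 ∧ (∀ n : ℤ, 0 < n → B.coeff n = 0) ∧
        mul d B B = A) ∧
    (∀ B : PDO R, B.coeff 0 = 1 → (∀ n : ℤ, 0 < n → B.coeff n = 0) →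
        mul d B B = A →
        (∀ n : ℤ, Odd n → A.coeff n = 0) → (∀ n : ℤ, d (A.coeff n) = 0) →
        (∀ n : ℤ, Odd n → B.coeff n = 0) ∧ (∀ n : ℤ, d (B.coeff n) = 0)) := by
  classical
  open ExtendedDTodaAux in
  constructor
  · -- existence and uniqueness of the square root
    set c : ℤ → R := toC (fun j => blist d A j j) with hc
    have hcpos : ∀ m : ℤ, 0 < m → c m = 0 := fun m hm => toC_pos _ _ hm
    have hc0 : c 0 = 1 := by
      show toC _ (0 : ℤ) = 1
      rw [show (0 : ℤ) = -((0 : ℕ) : ℤ) by simp, toC_natneg]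
      rfl
    refine ⟨⟨c, ⟨0, fun n hn => hcpos n hn⟩⟩, ⟨hc0, hcpos, ?_⟩, ?_⟩
    · -- B² = A
      apply PDOext
      intro n
      rw [mul_coeff]
      rcases lt_trichotomy n 0 with hn | hn | hn
      · rw [sq_coeff_neg d c hc0 hcpos n hn]
        have hn' : n = -(((-n).toNat : ℕ) : ℤ) := by omega
        rw [hn']
        exact bc_rec d A _ (by omega)
      · subst hn
        rw [sq_coeff_zero d c hcpos, hc0, hA0, one_mul]
      · rw [sq_coeff_pos d c hcpos n hn, hAtop n hn]
    · -- uniqueness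
      rintro B' ⟨h0', hpos', hmul'⟩
      have key : ∀ k : ℕ, B'.coeff (-(k : ℤ)) = c (-(k : ℤ)) := by
        intro k
        induction k using Nat.strong_induction_on with
        | _ k ih =>
          rcases Nat.eq_zero_or_pos k with rfl | hk
          · simpa using h0'.trans hc0.symm
          · have e1 : 2 * B'.coeff (-(k : ℤ)) + Tval d B'.coeff (-(k : ℤ)) =
                A.coeff (-(k : ℤ)) := by
              have := congrArg (fun P => PDO.coeff P (-(k : ℤ))) hmul'
              rwa [mul_coeff, sq_coeff_neg d _ h0' hpos' _ (by omega)] at this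
            have e2 : 2 * c (-(k : ℤ)) + Tval d c (-(k : ℤ)) = A.coeff (-(k : ℤ)) :=
              bc_rec d A k hk
            have eT : Tval d B'.coeff (-(k : ℤ)) = Tval d c (-(k : ℤ)) := by
              apply Tval_congr d _ _ hpos' hcpos
              intro m h1 h2
              have hm' : m = -(((-m).toNat : ℕ) : ℤ) := by omega
              rw [hm']
              exact ih _ (by omega)
            have h2x : (2 : R) * B'.coeff (-(k : ℤ)) = 2 * c (-(k : ℤ)) := by
              have := e1.trans e2.symm
              rw [eT] at this
              exact add_right_cancel this
            have := congrArg (fun y => ⅟(2 : R) * y) h2x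
            simpa [invOf_mul_cancel_left] using this
      apply PDOext
      intro n
      show B'.coeff n = c n
      rcases lt_or_ge 0 n with hn | hn
      · rw [hpos' n hn, hcpos n hn]
      · have hn' : n = -(((-n).toNat : ℕ) : ℤ) := by omega
        rw [hn']
        exact key _
  · -- parity and constancy
    intro B hB0 hBpos hmul hAodd hAd
    have key : ∀ k : ℕ, d (B.coeff (-(k : ℤ))) = 0 ∧
        (Odd (k : ℤ) → B.coeff (-(k : ℤ)) = 0) := by
      intro k
      induction k using Nat.strong_induction_on with
      | _ k ih =>
        rcases Nat.eq_zero_or_pos k with rfl | hk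
        · constructor
          · simp [hB0]
          · intro hodd
            rcases hodd with ⟨t, ht⟩
            exfalso
            omega
        · have hdc : ∀ m : ℤ, -(k : ℤ) < m → d (B.coeff m) = 0 := by
            intro m hm
            rcases lt_or_ge 0 m with h | h
            · rw [hBpos _ h, map_zero]
            · have hm' : m = -(((-m).toNat : ℕ) : ℤ) := by omega
              rw [hm']
              exact (ih _ (by omega)).1
          have hiter : ∀ (j : ℕ) (m : ℤ), -(k : ℤ) < m → 0 < j →
              (⇑d)^[j] (B.coeff m) = 0 := by
            intro j m hm hj
            obtain ⟨j, rfl⟩ : ∃ i, j = i + 1 := ⟨j - 1, by omega⟩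
            rw [Function.iterate_succ_apply, hdc m hm, iter_zero]
          have heq : 2 * B.coeff (-(k : ℤ)) + Tval d B.coeff (-(k : ℤ)) =
              A.coeff (-(k : ℤ)) := by
            have := congrArg (fun P => PDO.coeff P (-(k : ℤ))) hmul
            rwa [mul_coeff, sq_coeff_neg d _ hB0 hBpos _ (by omega)] at this
          have hd2 : d (2 : R) = 0 := by
            rw [show (2 : R) = 1 + 1 by norm_num, map_add]
            simp
          constructor
          · -- d-constancy
            have hT : d (Tval d B.coeff (-(k : ℤ))) = 0 := by
              unfold Tval
              rw [map_sum]
              apply Finset.sum_eq_zero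
              intro p hp
              simp only [Finset.mem_product, Finset.mem_Ioo] at hp
              unfold term
              rcases Nat.eq_zero_or_pos p.2 with h2 | h2
              · rw [h2]
                simp only [Function.iterate_zero, id_eq, Nat.cast_zero, add_zero,
                  zchoose_zero', one_smul]
                rw [Derivation.leibniz, hdc _ hp.1.1, hdc _ (by omega)]
                simp
              · rw [hiter _ _ (by omega) h2, smul_zero, mul_zero, map_zero]
            have h1 : d (2 * B.coeff (-(k : ℤ))) = 0 := by
              have := congrArg (⇑d) heq
              rwa [map_add, hT, add_zero, hAd] at this
            rw [Derivation.leibniz, hd2, smul_zero, add_zero, smul_eq_mul] at h1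
            have := congrArg (fun y => ⅟(2 : R) * y) h1
            simpa [invOf_mul_cancel_left] using this
          · -- odd coefficients vanish
            intro hodd
            have hoddc : ∀ m : ℤ, -(k : ℤ) < m → m < 0 → Odd m → B.coeff m = 0 := by
              intro m h1 h2 hm
              have hm' : m = -(((-m).toNat : ℕ) : ℤ) := by omega
              rw [hm']
              apply (ih _ (by omega)).2
              have : (((-m).toNat : ℕ) : ℤ) = -m := by omega
              rw [this]
              exact hm.neg
            have hT0 : Tval d B.coeff (-(k : ℤ)) = 0 := by
              unfold Tval
              apply Finset.sum_eq_zero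
              intro p hp
              simp only [Finset.mem_product, Finset.mem_Ioo] at hp
              unfold term
              rcases Nat.eq_zero_or_pos p.2 with h2 | h2
              · rw [h2]
                simp only [Function.iterate_zero, id_eq, Nat.cast_zero, add_zero]
                rcases Int.even_or_odd p.1 with he | ho
                · have hm2 : Odd (-(k : ℤ) - p.1) := by
                    rcases hodd with ⟨t, ht⟩
                    rcases he with ⟨s, hs⟩
                    exact ⟨-t - s - 1, by omega⟩
                  rw [hoddc _ (by omega) (by omega) hm2, smul_zero, mul_zero]
                · rw [hoddc _ hp.1.1 hp.1.2 ho, zero_mul]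
              · rw [hiter _ _ (by omega) h2, smul_zero, mul_zero]
            have hA0' : A.coeff (-(k : ℤ)) = 0 := hAodd _ hodd.neg
            have h2x : (2 : R) * B.coeff (-(k : ℤ)) = 0 := by
              rw [hT0, add_zero, hA0'] at heq
              exact heq
            have := congrArg (fun y => ⅟(2 : R) * y) h2x
            simpa [invOf_mul_cancel_left] using this
    constructor
    · intro n hn
      rcases lt_or_ge 0 n with h | h
      · exact hBpos n h
      · have hn' : n = -(((-n).toNat : ℕ) : ℤ) := by omega
        rw [hn']
        apply (key _).2
        have : (((-n).toNat : ℕ) : ℤ) = -n := by omega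
        rw [this]
        exact hn.neg
    · intro n
      rcases lt_or_ge 0 n with h | h
      · rw [hBpos n h, map_zero]
      · have hn' : n = -(((-n).toNat : ℕ) : ℤ) := by omega
        rw [hn']
        exact (key _).1
end

section
/- Let E = R[Λ, Λ^{-1}, ∂_2, ∂_3] be the ring of differential-difference operators over a commutative ring R equipped with commuting derivations ∂_2, ∂_3 and an automorphism Λ (all three pairwise commuting as operators, with Λ·f = f[1]·Λ and ∂_a·f = f·∂_a + ∂_a(f) for f ∈ R). Let q_1, q_2, q_3 ∈ R and set H_1 = ∂_2∂_3 + q_1, H_2 = (Λ-1)∂_2 - q_2(Λ+1), H_3 = (Λ+1)∂_3 - q_3(Λ-1). Assume ∂_2(q_3) = ∂_3(q_2) = q_1 + q_2q_3. Then (Λ+1)·H_1 = ∂_2·H_3 + q_3·H_2 holds in E, provided additionally q_1 + q_1[1] + 2q_2q_3 = 0. -/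
/-- in the ring `E = R[Λ, Λ^{-1}, ∂_2, ∂_3]` of
differential-difference operators over a commutative ring `R` with pairwise
commuting derivations `∂_2, ∂_3` and automorphism `σ` (so `Λ·f = σ(f)·Λ` and
`∂_a·f = f·∂_a + ∂_a(f)`), set `H_1 = ∂_2∂_3 + q_1`,
`H_2 = (Λ-1)∂_2 - q_2(Λ+1)`, `H_3 = (Λ+1)∂_3 - q_3(Λ-1)`.
If `∂_2(q_3) = ∂_3(q_2) = q_1 + q_2q_3` and `q_1 + q_1[1] + 2q_2q_3 = 0`, then
`(Λ+1)·H_1 = ∂_2·H_3 + q_3·H_2`. -/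
theorem statement12 {R E : Type} [CommRing R] [Ring E]
    (σ : RingAut R) (d2 d3 : Derivation ℤ R R)
    (hcommder : ∀ f : R, d2 (d3 f) = d3 (d2 f))
    (hσd2 : ∀ f : R, d2 (σ f) = σ (d2 f))
    (hσd3 : ∀ f : R, d3 (σ f) = σ (d3 f))
    (ι : R →+* E) (Λ Λi D2 D3 : E)
    (hΛunit : Λ * Λi = 1) (hΛunit' : Λi * Λ = 1)
    (hΛι : ∀ f : R, Λ * ι f = ι (σ f) * Λ)
    (hD2ι : ∀ f : R, D2 * ι f = ι f * D2 + ι (d2 f))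
    (hD3ι : ∀ f : R, D3 * ι f = ι f * D3 + ι (d3 f))
    (hD23 : D2 * D3 = D3 * D2)
    (hΛD2 : Λ * D2 = D2 * Λ) (hΛD3 : Λ * D3 = D3 * Λ)
    (q1 q2 q3 : R)
    (h23 : d2 q3 = q1 + q2 * q3) (h32 : d3 q2 = q1 + q2 * q3)
    (hq1 : q1 + σ q1 + 2 * (q2 * q3) = 0) :
    (Λ + 1) * (D2 * D3 + ι q1)
      = D2 * ((Λ + 1) * D3 - ι q3 * (Λ - 1))
        + ι q3 * ((Λ - 1) * D2 - ι q2 * (Λ + 1)) := by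
  have hσq : σ q1 = -q1 - q2 * q3 - q2 * q3 := by linear_combination hq1
  have e1 : Λ * ι q1 = ι (σ q1) * Λ := hΛι q1
  have e2 : D2 * ι q3 = ι q3 * D2 + ι (d2 q3) := hD2ι q3
  have e3 : D2 * (ι q3 * (Λ - 1)) = (ι q3 * D2 + ι (d2 q3)) * (Λ - 1) := by
    rw [← mul_assoc, e2]
  rw [hσq] at e1
  simp only [h23, map_add, map_mul, map_sub, map_neg] at e1 e2 e3 ⊢
  have eΛ : ι q3 * ((Λ - 1) * D2) = ι q3 * (D2 * (Λ - 1)) := by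
    rw [sub_mul, hΛD2]; noncomm_ring
  calc (Λ + 1) * (D2 * D3 + ι q1)
      = Λ * (D2 * D3) + D2 * D3 + Λ * ι q1 + ι q1 := by noncomm_ring
    _ = Λ * (D2 * D3) + D2 * D3 + (-ι q1 - ι q2 * ι q3 - ι q2 * ι q3) * Λ + ι q1 := by
        rw [e1]
    _ = D2 * (Λ * D3) + D2 * D3
        - (ι q3 * D2 + (ι q1 + ι q2 * ι q3)) * (Λ - 1)
        + ι q3 * (D2 * (Λ - 1)) - ι q2 * ι q3 * (Λ + 1) := by
          conv_lhs => rw [← mul_assoc, hΛD2, mul_assoc]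
          noncomm_ring
    _ = D2 * ((Λ + 1) * D3) - D2 * (ι q3 * (Λ - 1))
        + ι q3 * ((Λ - 1) * D2) - ι q3 * (ι q2 * (Λ + 1)) := by
          rw [eΛ, e3]
          have hc : ι q2 * ι q3 = ι q3 * ι q2 := by
            rw [← map_mul, ← map_mul, mul_comm]
          rw [hc]
          noncomm_ring
    _ = _ := by noncomm_ring
end

section
/- Let E = R[Λ, Λ^{-1}, ∂_2, ∂_3] be the ring of differential-difference operators over a commutative ℚ-algebra R with commuting derivations ∂_2, ∂_3 and automorphism Λ (relations Λf = f[1]Λ, ∂_a f = f∂_a + ∂_a(f)). Let q_1, q_2, q_3 ∈ R with ∂_2(q_3) = ∂_3(q_2) = q_1 + q_2q_3, and set H_1 = ∂_2∂_3 + q_1, H_2 = (Λ-1)∂_2 - q_2(Λ+1), H_3 = (Λ+1)∂_3 - q_3(Λ-1). Then H_1 = (1/2)(∂_2 - q_2)·H_3 - (1/2)(∂_3 - q_3)·H_2 holds in E. -/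
/-- in the ring `E = R[Λ, Λ^{-1}, ∂_2, ∂_3]` of
differential-difference operators over a commutative `ℚ`-algebra `R` with
pairwise commuting derivations `∂_2, ∂_3` and automorphism `σ` (relations
`Λ·f = σ(f)·Λ`, `∂_a·f = f·∂_a + ∂_a(f)`), set `H_1 = ∂_2∂_3 + q_1`,
`H_2 = (Λ-1)∂_2 - q_2(Λ+1)`, `H_3 = (Λ+1)∂_3 - q_3(Λ-1)`.
If `∂_2(q_3) = ∂_3(q_2) = q_1 + q_2q_3`, then
`H_1 = (1/2)(∂_2 - q_2)·H_3 - (1/2)(∂_3 - q_3)·H_2`. -/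
theorem statement13 {R E : Type} [CommRing R] [Algebra ℚ R]
    [Ring E] [Algebra ℚ E]
    (σ : RingAut R) (d2 d3 : Derivation ℤ R R)
    (hcommder : ∀ f : R, d2 (d3 f) = d3 (d2 f))
    (hσd2 : ∀ f : R, d2 (σ f) = σ (d2 f))
    (hσd3 : ∀ f : R, d3 (σ f) = σ (d3 f))
    (ι : R →+* E) (Λ Λi D2 D3 : E)
    (hΛunit : Λ * Λi = 1) (hΛunit' : Λi * Λ = 1)
    (hΛι : ∀ f : R, Λ * ι f = ι (σ f) * Λ)
    (hD2ι : ∀ f : R, D2 * ι f = ι f * D2 + ι (d2 f))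
    (hD3ι : ∀ f : R, D3 * ι f = ι f * D3 + ι (d3 f))
    (hD23 : D2 * D3 = D3 * D2)
    (hΛD2 : Λ * D2 = D2 * Λ) (hΛD3 : Λ * D3 = D3 * Λ)
    (q1 q2 q3 : R)
    (h23 : d2 q3 = q1 + q2 * q3) (h32 : d3 q2 = q1 + q2 * q3) :
    D2 * D3 + ι q1
      = ((1 : ℚ) / 2) • ((D2 - ι q2) * ((Λ + 1) * D3 - ι q3 * (Λ - 1)))
        - ((1 : ℚ) / 2) • ((D3 - ι q3) * ((Λ - 1) * D2 - ι q2 * (Λ + 1))) := by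

  set a := ι q2 with ha
  set b := ι q3 with hb
  set c := ι q1 with hc
  have hab : a * b = b * a := by
    rw [ha, hb, ← map_mul, ← map_mul, mul_comm]
  have r2 : D2 * b = b * D2 + (c + a * b) := by
    rw [hb, hD2ι q3, h23, map_add, map_mul]
  have r3 : D3 * a = a * D3 + (c + a * b) := by
    rw [ha, hD3ι q2, h32, map_add, map_mul]
  have hA : (D2 - a) * ((Λ + 1) * D3 - b * (Λ - 1))
      = D2 * (Λ * D3) + D2 * D3 - (D2 * b) * Λ + (D2 * b)
        - a * (Λ * D3) - a * D3 + a * b * Λ - a * b := by noncomm_ring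
  have hB : (D3 - b) * ((Λ - 1) * D2 - a * (Λ + 1))
      = D3 * (Λ * D2) - D3 * D2 - (D3 * a) * Λ - (D3 * a)
        - b * (Λ * D2) + b * D2 + b * a * Λ + b * a := by noncomm_ring
  have key : (D2 - a) * ((Λ + 1) * D3 - b * (Λ - 1))
      - (D3 - b) * ((Λ - 1) * D2 - a * (Λ + 1))
      = (D2 * D3 + c) + (D2 * D3 + c) := by
    rw [hA, hB, r2, r3, hΛD2, hΛD3, ← hab]
    have h1 : D2 * (D3 * Λ) = D3 * (D2 * Λ) := by
      rw [← mul_assoc, ← mul_assoc, hD23]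
    rw [h1, hD23]
    noncomm_ring
  have h2 : (D2 * D3 + c) + (D2 * D3 + c) = (2 : ℚ) • (D2 * D3 + c) :=
    (two_smul ℚ _).symm
  rw [← smul_sub, key, h2, smul_smul]
  norm_num
end
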